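/- arXiv:1202.6156 — 5 statements merged into one kernel-verified Lean document; each statement's English description precedes it below -/
import Mathlib

section
/- A function φ : [1,∞) → (0,∞) (Borel measurable) is RO-varying at infinity if and only if it can be represented as φ(t) = exp(β(t) + ∫₁^t α(τ)/τ dτ) for t ≥ 1, where α and β are real-valued Borel measurable functions bounded on [1,∞). -/
open MeasureTheory Set

noncomputable section

/-- A Borel measurable function `φ : [1,∞) → (0,∞)` is RO-varying at infinity:
there exist `a > 1` and `c ≥ 1` with `c⁻¹ ≤ φ(λt)/φ(t) ≤ c` for all `t ≥ 1`, `λ ∈ [1,a]`. -/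
def IsRO (φ : ℝ → ℝ) : Prop :=
  Measurable ((Set.Ici (1:ℝ)).restrict φ) ∧ (∀ t : ℝ, 1 ≤ t → 0 < φ t) ∧
  ∃ a : ℝ, 1 < a ∧ ∃ c : ℝ, 1 ≤ c ∧
    ∀ t : ℝ, 1 ≤ t → ∀ l : ℝ, l ∈ Set.Icc (1:ℝ) a →
      c⁻¹ ≤ φ (l * t) / φ t ∧ φ (l * t) / φ t ≤ c

/-- Interval integrability from a bound on the unordered closed interval. -/
lemma RO.intervalIntegrable_of_bdd {f : ℝ → ℝ} {a b M : ℝ} (hf : Measurable f)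
    (hM : ∀ x ∈ Set.uIcc a b, |f x| ≤ M) : IntervalIntegrable f volume a b := by
  rw [intervalIntegrable_iff]
  apply Measure.integrableOn_of_bounded (M := M) measure_Ioc_lt_top.ne
    hf.aestronglyMeasurable
  filter_upwards [ae_restrict_mem measurableSet_uIoc] with x hx
  rw [Real.norm_eq_abs]
  exact hM x (Set.uIoc_subset_uIcc hx)

/-- A function measurable on `[1,∞)` extends to a globally measurable function. -/
lemma RO.exists_ext {f : ℝ → ℝ} (hf : Measurable ((Set.Ici (1:ℝ)).restrict f)) :
    ∃ g : ℝ → ℝ, Measurable g ∧ ∀ t, 1 ≤ t → g t = f t := by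
  obtain ⟨g, hg, hgf⟩ :=
    (MeasurableEmbedding.subtype_coe (measurableSet_Ici (a := (1:ℝ)))).exists_measurable_extend
      hf (fun _ => ⟨0⟩)
  exact ⟨g, hg, fun t ht => by simpa [Set.restrict] using congrFun hgf ⟨t, ht⟩⟩

/-- A Borel measurable positive function `φ` on `[1,∞)` is RO-varying at infinity
if and only if `φ(t) = exp(β(t) + ∫₁^t α(τ)/τ dτ)` for `t ≥ 1`, with `α, β`
Borel measurable and bounded on `[1,∞)`. -/
theorem isRO_iff_representation (φ : ℝ → ℝ)
    (hmeas : Measurable ((Set.Ici (1:ℝ)).restrict φ))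
    (hpos : ∀ t : ℝ, 1 ≤ t → 0 < φ t) :
    IsRO φ ↔
      ∃ α β : ℝ → ℝ,
        Measurable ((Set.Ici (1:ℝ)).restrict α) ∧
        Measurable ((Set.Ici (1:ℝ)).restrict β) ∧
        (∃ C : ℝ, ∀ t : ℝ, 1 ≤ t → |α t| ≤ C ∧ |β t| ≤ C) ∧
        ∀ t : ℝ, 1 ≤ t →
          φ t = Real.exp (β t + ∫ τ in (1:ℝ)..t, α τ / τ) := by
  constructor
  · rintro ⟨-, -, a, ha, c, hc, hro⟩
    obtain ⟨ψ, hψm, hψ⟩ := RO.exists_ext hmeas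
    have ha0 : (0:ℝ) < a := lt_trans one_pos ha
    have hc0 : (0:ℝ) < c := lt_of_lt_of_le one_pos hc
    have hlc0 : 0 ≤ Real.log c := Real.log_nonneg hc
    set la := Real.log a with hladef
    have hla0 : 0 < la := Real.log_pos ha
    set h : ℝ → ℝ := fun τ => Real.log (ψ τ) with hhdef
    have hhm : Measurable h := Real.measurable_log.comp hψm
    have hh : ∀ τ, 1 ≤ τ → h τ = Real.log (φ τ) := fun τ hτ => by
      simp only [hhdef, hψ τ hτ]
    -- difference bound
    have hdiff : ∀ t, 1 ≤ t → ∀ l ∈ Set.Icc (1:ℝ) a, |h (l * t) - h t| ≤ Real.log c := by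
      intro t ht l hl
      have hlt : 1 ≤ l * t := by nlinarith [hl.1]
      have hφt := hpos t ht
      have hφlt := hpos _ hlt
      obtain ⟨hr1, hr2⟩ := hro t ht l hl
      have hrpos : 0 < φ (l * t) / φ t := div_pos hφlt hφt
      rw [hh _ hlt, hh _ ht, ← Real.log_div (ne_of_gt hφlt) (ne_of_gt hφt), abs_le]
      constructor
      · rw [← Real.log_inv]
        exact Real.log_le_log (inv_pos.2 hc0) hr1
      · exact Real.log_le_log hrpos hr2
    -- growth bound
    have hbd : ∀ n : ℕ, ∀ τ : ℝ, 1 ≤ τ → τ ≤ a ^ n → |h τ| ≤ |h 1| + n * Real.log c := by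
      intro n
      induction n with
      | zero =>
        intro τ h1 h2
        simp only [pow_zero] at h2
        have : τ = 1 := le_antisymm h2 h1
        simp [this]
      | succ n ih =>
        intro τ h1 h2
        have hτ0 : 0 < τ := lt_of_lt_of_le one_pos h1
        set s := max 1 (τ / a) with hsdef
        have hs1 : 1 ≤ s := le_max_left _ _
        have hs0 : 0 < s := lt_of_lt_of_le one_pos hs1
        have hsan : s ≤ a ^ n := by
          apply max_le (one_le_pow₀ (le_of_lt ha))
          rw [div_le_iff₀ ha0, ← pow_succ]
          exact h2
        have hsτ : s ≤ τ := by
          apply max_le h1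
          exact div_le_self (le_of_lt hτ0) (le_of_lt ha)
        set l := τ / s with hldef
        have hl1 : 1 ≤ l := (one_le_div hs0).2 hsτ
        have hla' : l ≤ a := by
          rw [div_le_iff₀ hs0]
          calc τ = a * (τ / a) := by field_simp
            _ ≤ a * s := by
                apply mul_le_mul_of_nonneg_left (le_max_right _ _) (le_of_lt ha0)
        have hls : l * s = τ := div_mul_cancel₀ τ (ne_of_gt hs0)
        have hd := hdiff s hs1 l ⟨hl1, hla'⟩
        rw [hls] at hd
        have hihs := ih s hs1 hsan
        calc |h τ| = |(h τ - h s) + h s| := by ring_nf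
          _ ≤ |h τ - h s| + |h s| := abs_add_le _ _
          _ ≤ Real.log c + (|h 1| + n * Real.log c) := add_le_add hd hihs
          _ = |h 1| + (n + 1 : ℕ) * Real.log c := by push_cast; ring
    -- integrability of h τ / τ on intervals in [1,∞)
    have hFm : Measurable (fun τ : ℝ => h τ / τ) := hhm.div measurable_id
    have hFint : ∀ x y : ℝ, 1 ≤ x → 1 ≤ y →
        IntervalIntegrable (fun τ : ℝ => h τ / τ) volume x y := by
      intro x y hx hy
      obtain ⟨n, hn⟩ := pow_unbounded_of_one_lt (max x y) ha
      apply RO.intervalIntegrable_of_bdd (M := |h 1| + n * Real.log c) hFm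
      intro τ hτ
      rw [Set.uIcc] at hτ
      have h1τ : 1 ≤ τ := le_trans (le_min hx hy) hτ.1
      have h2τ : τ ≤ a ^ n := le_of_lt (lt_of_le_of_lt (le_trans hτ.2 (le_refl _)) hn)
      calc |h τ / τ| = |h τ| / |τ| := abs_div _ _
        _ ≤ |h τ| := by
            apply div_le_self (abs_nonneg _)
            rw [abs_of_pos (lt_of_lt_of_le one_pos h1τ)]; exact h1τ
        _ ≤ |h 1| + n * Real.log c := hbd n τ h1τ h2τ
    -- define α
    set αf : ℝ → ℝ := fun τ => if 1 ≤ τ then (h (a * τ) - h τ) / la else 0 with hαdef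
    have hαm : Measurable αf := by
      apply Measurable.ite measurableSet_Ici
      · exact ((hhm.comp (measurable_const_mul a)).sub hhm).div_const la
      · exact measurable_const
    have hαbd : ∀ τ, |αf τ| ≤ Real.log c / la := by
      intro τ
      by_cases hτ : 1 ≤ τ
      · simp only [hαdef, if_pos hτ]
        rw [abs_div, abs_of_pos hla0]
        apply div_le_div_of_nonneg_right ?_ hla0.le
        exact hdiff τ hτ a ⟨le_of_lt ha, le_refl a⟩
      · simp only [hαdef, if_neg hτ, abs_zero]
        positivity
    have hqbd : ∀ τ, |αf τ / τ| ≤ Real.log c / la := by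
      intro τ
      by_cases hτ : 1 ≤ τ
      · calc |αf τ / τ| = |αf τ| / |τ| := abs_div _ _
          _ ≤ |αf τ| := by
              apply div_le_self (abs_nonneg _)
              rw [abs_of_pos (lt_of_lt_of_le one_pos hτ)]; exact hτ
          _ ≤ Real.log c / la := hαbd τ
      · simp only [hαdef, if_neg hτ, zero_div, abs_zero]
        positivity
    have hqint : ∀ x y : ℝ, IntervalIntegrable (fun τ => αf τ / τ) volume x y := by
      intro x y
      exact RO.intervalIntegrable_of_bdd (hαm.div measurable_id) (fun τ _ => hqbd τ)
    -- integrability of h(aτ)/τ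
    have hGint : ∀ x y : ℝ, 1 ≤ x → 1 ≤ y →
        IntervalIntegrable (fun τ : ℝ => h (a * τ) / τ) volume x y := by
      intro x y hx hy
      obtain ⟨n, hn⟩ := pow_unbounded_of_one_lt (a * max x y) ha
      apply RO.intervalIntegrable_of_bdd (M := |h 1| + n * Real.log c)
        ((hhm.comp (measurable_const_mul a)).div measurable_id)
      intro τ hτ
      rw [Set.uIcc] at hτ
      have h1τ : 1 ≤ τ := le_trans (le_min hx hy) hτ.1
      have h1aτ : 1 ≤ a * τ :=
        by nlinarith
      have h2τ : a * τ ≤ a ^ n := by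
        apply le_of_lt (lt_of_le_of_lt ?_ hn)
        exact mul_le_mul_of_nonneg_left hτ.2 (le_of_lt ha0)
      calc |h (a * τ) / τ| = |h (a * τ)| / |τ| := abs_div _ _
        _ ≤ |h (a * τ)| := by
            apply div_le_self (abs_nonneg _)
            rw [abs_of_pos (lt_of_lt_of_le one_pos h1τ)]; exact h1τ
        _ ≤ |h 1| + n * Real.log c := hbd n _ h1aτ h2τ
    -- key computation
    have key : ∀ t : ℝ, 1 ≤ t → ∫ τ in (1:ℝ)..t, αf τ / τ
        = la⁻¹ * ((∫ τ in t..(a * t), h τ / τ) - ∫ τ in (1:ℝ)..a, h τ / τ) := by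
      intro t ht
      have ht0 : 0 < t := lt_of_lt_of_le one_pos ht
      have hat : 1 ≤ a * t := by nlinarith
      have hta : t ≤ a * t := le_mul_of_one_le_left (le_of_lt ht0) (le_of_lt ha)
      have e1 : ∫ τ in (1:ℝ)..t, αf τ / τ
          = ∫ τ in (1:ℝ)..t, la⁻¹ * (h (a * τ) / τ - h τ / τ) := by
        apply intervalIntegral.integral_congr
        intro τ hτ
        rw [Set.uIcc_of_le ht] at hτ
        simp only [hαdef, if_pos hτ.1]
        ring
      rw [e1, intervalIntegral.integral_const_mul,
        intervalIntegral.integral_sub (hGint 1 t le_rfl ht) (hFint 1 t le_rfl ht)]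
      congr 1
      have e2 : ∫ τ in (1:ℝ)..t, h (a * τ) / τ = ∫ τ in a..(a * t), h τ / τ := by
        have e2a : ∫ τ in (1:ℝ)..t, h (a * τ) / τ
            = ∫ τ in (1:ℝ)..t, a * ((fun σ => h σ / σ) (a * τ)) := by
          apply intervalIntegral.integral_congr
          intro τ hτ
          rw [Set.uIcc_of_le ht] at hτ
          have hτ0 : τ ≠ 0 := ne_of_gt (lt_of_lt_of_le one_pos hτ.1)
          field_simp
        have E := intervalIntegral.smul_integral_comp_mul_left (f := fun σ => h σ / σ)
          (a := 1) (b := t) a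
        simp only [smul_eq_mul, mul_one] at E
        rw [e2a, intervalIntegral.integral_const_mul]
        simpa using E
      rw [e2]
      have A := intervalIntegral.integral_add_adjacent_intervals
        (hFint 1 a le_rfl (le_of_lt ha)) (hFint a (a * t) (le_of_lt ha) hat)
      have B := intervalIntegral.integral_add_adjacent_intervals
        (hFint 1 t le_rfl ht) (hFint t (a * t) ht hat)
      linarith
    -- define β
    set βf : ℝ → ℝ := fun t => h t - ∫ τ in (1:ℝ)..t, αf τ / τ with hβdef
    have hβm : Measurable βf :=
      hhm.sub (intervalIntegral.continuous_primitive hqint 1).measurable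
    set D := |∫ τ in (1:ℝ)..a, h τ / τ| with hDdef
    refine ⟨αf, βf, hαm.comp measurable_subtype_coe, hβm.comp measurable_subtype_coe,
      ⟨Real.log c / la + (Real.log c + la⁻¹ * D), ?_⟩, ?_⟩
    · intro t ht
      have hD0 : 0 ≤ D := abs_nonneg _
      have hK0 : 0 ≤ Real.log c + la⁻¹ * D := by positivity
      constructor
      · calc |αf t| ≤ Real.log c / la := hαbd t
          _ ≤ Real.log c / la + (Real.log c + la⁻¹ * D) := le_add_of_nonneg_right hK0
      · -- bound on β
        have ht0 : 0 < t := lt_of_lt_of_le one_pos ht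
        have hat : 1 ≤ a * t := by nlinarith
        have hta : t ≤ a * t := le_mul_of_one_le_left (le_of_lt ht0) (le_of_lt ha)
        have hconst_int : IntervalIntegrable (fun τ : ℝ => h t / τ) volume t (a * t) := by
          apply RO.intervalIntegrable_of_bdd (M := |h t|) (measurable_const.div measurable_id)
          intro τ hτ
          rw [Set.uIcc_of_le hta] at hτ
          have h1τ : 1 ≤ τ := le_trans ht hτ.1
          calc |h t / τ| = |h t| / |τ| := abs_div _ _
            _ ≤ |h t| := by
                apply div_le_self (abs_nonneg _)
                rw [abs_of_pos (lt_of_lt_of_le one_pos h1τ)]; exact h1τ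
        have hconst_eval : ∫ τ in t..(a * t), h t / τ = h t * la := by
          simp only [div_eq_mul_inv]
          rw [intervalIntegral.integral_const_mul, integral_inv_of_pos ht0 (by positivity),
            mul_div_assoc, div_self (ne_of_gt ht0), mul_one, hladef]
        have hlc_int : IntervalIntegrable (fun τ : ℝ => Real.log c / τ) volume t (a * t) := by
          apply RO.intervalIntegrable_of_bdd (M := Real.log c)
            (measurable_const.div measurable_id)
          intro τ hτ
          rw [Set.uIcc_of_le hta] at hτ
          have h1τ : 1 ≤ τ := le_trans ht hτ.1
          rw [Pi.div_apply, abs_div, abs_of_nonneg hlc0]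
          apply div_le_self hlc0
          simp only [id_eq, abs_of_pos (lt_of_lt_of_le one_pos h1τ)]; exact h1τ
        have hlc_eval : ∫ τ in t..(a * t), Real.log c / τ = Real.log c * la := by
          simp only [div_eq_mul_inv]
          rw [intervalIntegral.integral_const_mul, integral_inv_of_pos ht0 (by positivity),
            mul_div_assoc, div_self (ne_of_gt ht0), mul_one, hladef]
        have hmain : |h t - la⁻¹ * ∫ τ in t..(a * t), h τ / τ| ≤ Real.log c := by
          have e3 : h t - la⁻¹ * ∫ τ in t..(a * t), h τ / τ
              = la⁻¹ * ∫ τ in t..(a * t), (h t / τ - h τ / τ) := by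
            rw [intervalIntegral.integral_sub hconst_int (hFint t (a * t) ht hat),
              hconst_eval]
            field_simp
          rw [e3, abs_mul, abs_of_pos (inv_pos.2 hla0)]
          have habs : |∫ τ in t..(a * t), (h t / τ - h τ / τ)| ≤ Real.log c * la := by
            calc |∫ τ in t..(a * t), (h t / τ - h τ / τ)|
                ≤ ∫ τ in t..(a * t), |h t / τ - h τ / τ| :=
                  intervalIntegral.abs_integral_le_integral_abs hta
              _ ≤ ∫ τ in t..(a * t), Real.log c / τ := by
                  apply intervalIntegral.integral_mono_on hta
                    (hconst_int.sub (hFint t (a * t) ht hat)).abs hlc_int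
                  intro τ hτ
                  have h1τ : 1 ≤ τ := le_trans ht hτ.1
                  have hτ0 : 0 < τ := lt_of_lt_of_le one_pos h1τ
                  have : h t / τ - h τ / τ = (h t - h τ) / τ := by ring
                  rw [this, abs_div, abs_of_pos hτ0]
                  apply div_le_div_of_nonneg_right ?_ hτ0.le
                  -- |h t - h τ| ≤ log c  with τ = l * t, l ∈ [1,a]
                  have hlmem : τ / t ∈ Set.Icc (1:ℝ) a := by
                    constructor
                    · rw [le_div_iff₀ ht0, one_mul]; exact hτ.1
                    · rw [div_le_iff₀ ht0]; exact hτ.2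
                  have := hdiff t ht (τ / t) hlmem
                  rw [div_mul_cancel₀ τ (ne_of_gt ht0)] at this
                  rw [abs_sub_comm]
                  exact this
              _ = Real.log c * la := hlc_eval
          calc la⁻¹ * |∫ τ in t..(a * t), (h t / τ - h τ / τ)|
              ≤ la⁻¹ * (Real.log c * la) := by
                apply mul_le_mul_of_nonneg_left habs (le_of_lt (inv_pos.2 hla0))
            _ = Real.log c := by field_simp
        have e5 : βf t = (h t - la⁻¹ * ∫ τ in t..(a * t), h τ / τ)
            + la⁻¹ * ∫ τ in (1:ℝ)..a, h τ / τ := by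
          simp only [hβdef, key t ht]
          ring
        calc |βf t| ≤ |h t - la⁻¹ * ∫ τ in t..(a * t), h τ / τ|
              + |la⁻¹ * ∫ τ in (1:ℝ)..a, h τ / τ| := by rw [e5]; exact abs_add_le _ _
          _ ≤ Real.log c + la⁻¹ * D := by
              apply add_le_add hmain
              rw [abs_mul, abs_of_pos (inv_pos.2 hla0)]
          _ ≤ Real.log c / la + (Real.log c + la⁻¹ * D) := le_add_of_nonneg_left (by positivity)
    · intro t ht
      have : βf t + ∫ τ in (1:ℝ)..t, αf τ / τ = h t := by simp only [hβdef]; ring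
      rw [this, hh t ht, Real.exp_log (hpos t ht)]
  · rintro ⟨α, β, hαm, hβm, ⟨C, hC⟩, hrep⟩
    obtain ⟨g, hgm, hg⟩ := RO.exists_ext hαm
    set α' : ℝ → ℝ := fun u => if 1 ≤ u then g u else 0 with hα'def
    have hC0 : 0 ≤ C := le_trans (abs_nonneg _) (hC 1 le_rfl).1
    have hα'bd : ∀ u, |α' u| ≤ C := by
      intro u
      by_cases hu : 1 ≤ u
      · simp only [hα'def, if_pos hu, hg u hu]
        exact (hC u hu).1
      · simp only [hα'def, if_neg hu, abs_zero]
        exact hC0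
    have hα'm : Measurable α' := Measurable.ite measurableSet_Ici hgm measurable_const
    have hqbd : ∀ τ, |α' τ / τ| ≤ C := by
      intro τ
      by_cases hτ : 1 ≤ τ
      · calc |α' τ / τ| = |α' τ| / |τ| := abs_div _ _
          _ ≤ |α' τ| := by
              apply div_le_self (abs_nonneg _)
              rw [abs_of_pos (lt_of_lt_of_le one_pos hτ)]; exact hτ
          _ ≤ C := hα'bd τ
      · simp only [hα'def, if_neg hτ, zero_div, abs_zero]
        exact hC0
    have hq : ∀ x y : ℝ, IntervalIntegrable (fun τ => α' τ / τ) volume x y := by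
      intro x y
      exact RO.intervalIntegrable_of_bdd (hα'm.div measurable_id) (fun τ _ => hqbd τ)
    have hint_eq : ∀ t : ℝ, 1 ≤ t →
        (∫ τ in (1:ℝ)..t, α τ / τ) = ∫ τ in (1:ℝ)..t, α' τ / τ := by
      intro t ht
      apply intervalIntegral.integral_congr
      intro τ hτ
      rw [Set.uIcc_of_le ht] at hτ
      simp only [hα'def, if_pos hτ.1, hg τ hτ.1]
    refine ⟨hmeas, hpos, 2, one_lt_two, Real.exp (2 * C + C * Real.log 2),
      Real.one_le_exp (by positivity), ?_⟩
    intro t ht l hl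
    have ht0 : 0 < t := lt_of_lt_of_le one_pos ht
    have hlt : 1 ≤ l * t := by nlinarith [hl.1]
    have htl : t ≤ l * t := le_mul_of_one_le_left (le_of_lt ht0) hl.1
    have e : φ (l * t) / φ t
        = Real.exp ((β (l * t) - β t) + ∫ τ in t..(l * t), α' τ / τ) := by
      rw [hrep t ht, hrep _ hlt, ← Real.exp_sub]
      congr 1
      rw [hint_eq t ht, hint_eq _ hlt]
      have A := intervalIntegral.integral_add_adjacent_intervals (hq 1 t) (hq t (l * t))
      linarith
    have hC_int : IntervalIntegrable (fun τ : ℝ => C / τ) volume t (l * t) := by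
      apply RO.intervalIntegrable_of_bdd (M := C) (measurable_const.div measurable_id)
      intro τ hτ
      rw [Set.uIcc_of_le htl] at hτ
      have h1τ : 1 ≤ τ := le_trans ht hτ.1
      rw [Pi.div_apply, abs_div, abs_of_nonneg hC0]
      apply div_le_self hC0
      simp only [id_eq, abs_of_pos (lt_of_lt_of_le one_pos h1τ)]; exact h1τ
    have hC_eval : ∫ τ in t..(l * t), C / τ = C * Real.log l := by
      simp only [div_eq_mul_inv]
      rw [intervalIntegral.integral_const_mul, integral_inv_of_pos ht0
        (lt_of_lt_of_le one_pos hlt), mul_div_assoc, div_self (ne_of_gt ht0), mul_one]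
    have h2 : |∫ τ in t..(l * t), α' τ / τ| ≤ C * Real.log 2 := by
      calc |∫ τ in t..(l * t), α' τ / τ|
          ≤ ∫ τ in t..(l * t), |α' τ / τ| :=
            intervalIntegral.abs_integral_le_integral_abs htl
        _ ≤ ∫ τ in t..(l * t), C / τ := by
            apply intervalIntegral.integral_mono_on htl (hq t (l * t)).abs hC_int
            intro τ hτ
            have h1τ : 1 ≤ τ := le_trans ht hτ.1
            have hτ0 : 0 < τ := lt_of_lt_of_le one_pos h1τ
            rw [abs_div, abs_of_pos hτ0]
            exact div_le_div_of_nonneg_right (hα'bd τ) hτ0.le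
        _ = C * Real.log l := hC_eval
        _ ≤ C * Real.log 2 := by
            apply mul_le_mul_of_nonneg_left ?_ hC0
            exact Real.log_le_log (lt_of_lt_of_le one_pos hl.1) hl.2
    have hΔ : |(β (l * t) - β t) + ∫ τ in t..(l * t), α' τ / τ| ≤ 2 * C + C * Real.log 2 := by
      calc |(β (l * t) - β t) + ∫ τ in t..(l * t), α' τ / τ|
          ≤ |β (l * t) - β t| + |∫ τ in t..(l * t), α' τ / τ| := abs_add_le _ _
        _ ≤ (|β (l * t)| + |β t|) + C * Real.log 2 := add_le_add (abs_sub _ _) h2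
        _ ≤ (C + C) + C * Real.log 2 :=
            add_le_add (add_le_add (hC _ hlt).2 (hC t ht).2) le_rfl
        _ = 2 * C + C * Real.log 2 := by ring
    rw [e]
    obtain ⟨hΔ1, hΔ2⟩ := abs_le.mp hΔ
    constructor
    · rw [← Real.exp_neg]
      exact Real.exp_le_exp.2 (by linarith)
    · exact Real.exp_le_exp.2 hΔ2
end
end

section
/- Let ω : [1,∞) → (0,∞) be RO-varying at infinity, λ ≥ 0 an integer, and n ≥ 1. Then ∫_{ℝⁿ} ⟨ξ⟩^{2λ} ω(⟨ξ⟩)^{-2} dξ < ∞ if and only if ∫₁^∞ t^{2λ+n-1} ω(t)^{-2} dt < ∞, where ⟨ξ⟩ := (1+|ξ|²)^{1/2}. -/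
open MeasureTheory Set

noncomputable section

/-- The smoothed norm `⟨ξ⟩ = (1+|ξ|²)^{1/2}` of `ξ ∈ ℝⁿ`. -/
def smoothedNorm {n : ℕ} (ξ : EuclideanSpace ℝ (Fin n)) : ℝ :=
  Real.sqrt (1 + ‖ξ‖ ^ 2)

lemma measurable_omax {ω : ℝ → ℝ} (h : Measurable ((Set.Ici (1:ℝ)).restrict ω)) :
    Measurable (fun t : ℝ => ω (max t 1)) := by
  have hm : Measurable (fun t : ℝ => (⟨max t 1, Set.mem_Ici.2 (le_max_right _ _)⟩ : Set.Ici (1:ℝ))) :=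
    Measurable.subtype_mk (measurable_id.max measurable_const)
  exact h.comp hm


lemma IsRO.lower_bound {ω : ℝ → ℝ} (hω : IsRO ω) (M : ℝ) :
    ∃ ε : ℝ, 0 < ε ∧ ∀ t : ℝ, 1 ≤ t → t ≤ M → ε ≤ ω t := by
  obtain ⟨-, hpos, a, ha, c, hc, hbd⟩ := hω
  have hc0 : 0 < c := lt_of_lt_of_le one_pos hc
  have key : ∀ k : ℕ, ∀ t : ℝ, 1 ≤ t → t ≤ a ^ k → ω 1 / c ^ k ≤ ω t := by
    intro k
    induction k with
    | zero =>
      intro t ht ht'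
      have : t = 1 := le_antisymm (by simpa using ht') ht
      simp [this]
    | succ k ih =>
      intro t ht ht'
      by_cases h : t ≤ a ^ k
      · refine le_trans ?_ (ih t ht h)
        gcongr
        exacts [(hpos 1 le_rfl).le, Nat.le_succ k]
      · push_neg at h
        have hak : (1:ℝ) ≤ a ^ k := one_le_pow₀ ha.le
        have hak0 : (0:ℝ) < a ^ k := lt_of_lt_of_le one_pos hak
        have hl1 : (1:ℝ) ≤ t / a ^ k := (one_le_div hak0).2 h.le
        have hl2 : t / a ^ k ≤ a := by
          rw [div_le_iff₀ hak0]
          calc t ≤ a ^ (k+1) := ht'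
          _ = a * a ^ k := by ring
        have hq := (hbd (a ^ k) hak (t / a ^ k) ⟨hl1, hl2⟩).1
        rw [div_mul_cancel₀ _ (ne_of_gt hak0)] at hq
        have hωak : 0 < ω (a ^ k) := hpos _ hak
        have h1 : c⁻¹ * ω (a ^ k) ≤ ω t := (le_div_iff₀ hωak).1 hq
        have h2 : ω 1 / c ^ k ≤ ω (a ^ k) := ih _ hak le_rfl
        calc ω 1 / c ^ (k+1) = c⁻¹ * (ω 1 / c ^ k) := by
              rw [pow_succ]; field_simp
        _ ≤ c⁻¹ * ω (a ^ k) := mul_le_mul_of_nonneg_left h2 (by positivity : (0:ℝ) ≤ c⁻¹)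
        _ ≤ ω t := h1
  obtain ⟨k, hk⟩ := pow_unbounded_of_one_lt M ha
  exact ⟨ω 1 / c ^ k, div_pos (hpos 1 le_rfl) (by positivity), fun t ht htM => key k t ht (htM.trans hk.le)⟩

lemma lintegral_fun_norm_aux {E : Type*} [NormedAddCommGroup E] [NormedSpace ℝ E]
    [MeasurableSpace E] [BorelSpace E] [FiniteDimensional ℝ E] [Nontrivial E]
    (μ : Measure E) [μ.IsAddHaarMeasure] (f : ℝ → ENNReal) (hf : Measurable f) :
    ∫⁻ x, f ‖x‖ ∂μ = (μ.toSphere univ) *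
      ∫⁻ y in Ioi (0:ℝ), ENNReal.ofReal (y ^ (Module.finrank ℝ E - 1)) * f y := by
  calc
    ∫⁻ x, f ‖x‖ ∂μ = ∫⁻ x : ({(0)}ᶜ : Set E), f ‖x.1‖ ∂(μ.comap (↑)) := by
      rw [lintegral_subtype_comap (measurableSet_singleton _).compl fun x ↦ f ‖x‖,
        MeasureTheory.restrict_compl_singleton]
    _ = ∫⁻ x : Metric.sphere (0 : E) 1 × Ioi (0 : ℝ), f x.2
          ∂μ.toSphere.prod (.volumeIoiPow (Module.finrank ℝ E - 1)) :=
      by simpa using μ.measurePreserving_homeomorphUnitSphereProd.lintegral_comp_emb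
          (Homeomorph.measurableEmbedding _) (f ∘ Subtype.val ∘ Prod.snd)
    _ = (μ.toSphere univ) * ∫⁻ x : Ioi (0 : ℝ), f x ∂(Measure.volumeIoiPow (Module.finrank ℝ E - 1)) := by
      rw [lintegral_prod _ (by exact ((hf.comp measurable_subtype_coe).comp measurable_snd).aemeasurable :
        AEMeasurable (fun z : Metric.sphere (0:E) 1 × Ioi (0:ℝ) => f z.2) _)]
      simp [lintegral_const, mul_comm]
    _ = _ := by
      rw [Measure.volumeIoiPow, lintegral_withDensity_eq_lintegral_mul _
          (by exact (measurable_subtype_coe.pow_const _).ennreal_ofReal)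
          (by exact hf.comp measurable_subtype_coe :
            Measurable (fun y : Ioi (0:ℝ) => f y))]
      congr 1
      rw [← lintegral_subtype_comap measurableSet_Ioi
        (fun y : ℝ => ENNReal.ofReal (y ^ (Module.finrank ℝ E - 1)) * f y)]
      rfl

lemma lintegral_image_eq_lintegral_abs_deriv_mul' {s : Set ℝ} {f f' : ℝ → ℝ}
    (hs : MeasurableSet s) (hf' : ∀ x ∈ s, HasDerivWithinAt f (f' x) s x) (hf : InjOn f s)
    (g : ℝ → ENNReal) :
    ∫⁻ x in f '' s, g x = ∫⁻ x in s, ENNReal.ofReal |f' x| * g (f x) := by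
  simpa only [ContinuousLinearMap.det_toSpanSingleton] using
    lintegral_image_eq_lintegral_abs_det_fderiv_mul volume hs
      (fun x hx => (hf' x hx).hasFDerivWithinAt) hf g

lemma sqrt_facts {r : ℝ} (hr : 0 < r) :
    r ≤ Real.sqrt (1 + r ^ 2) ∧ (1 ≤ r → Real.sqrt (1 + r ^ 2) ≤ 2 * r)
      ∧ 1 ≤ Real.sqrt (1 + r ^ 2) := by
  have h1 : r ≤ Real.sqrt (1 + r ^ 2) := by
    nlinarith [Real.sq_sqrt (by positivity : (0:ℝ) ≤ 1 + r ^ 2),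
      Real.sqrt_nonneg (1 + r ^ 2), sq_nonneg (r - Real.sqrt (1 + r ^ 2))]
  refine ⟨h1, fun hr1 => ?_, ?_⟩
  · calc Real.sqrt (1 + r ^ 2) ≤ Real.sqrt ((2*r) ^ 2) := by
          apply Real.sqrt_le_sqrt; nlinarith
    _ = 2 * r := Real.sqrt_sq (by linarith)
  · calc (1:ℝ) = Real.sqrt 1 := Real.sqrt_one.symm
    _ ≤ _ := Real.sqrt_le_sqrt (by nlinarith)


lemma core_ineq (n lam : ℕ) (hn : 1 ≤ n) (w r : ℝ) (hw : 0 ≤ w) (hr : 1 ≤ r) :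
    r ^ (n-1) * (Real.sqrt (1+r^2) ^ (2*(lam:ℝ)) * w)
        ≤ 2^n * ((r / Real.sqrt (1+r^2)) * (Real.sqrt (1+r^2) ^ (2*(lam:ℝ)+n-1) * w)) ∧
      (r / Real.sqrt (1+r^2)) * (Real.sqrt (1+r^2) ^ (2*(lam:ℝ)+n-1) * w)
        ≤ 2^n * (r ^ (n-1) * (Real.sqrt (1+r^2) ^ (2*(lam:ℝ)) * w)) := by
  set s := Real.sqrt (1+r^2) with hs
  have hr0 : (0:ℝ) < r := lt_of_lt_of_le one_pos hr
  obtain ⟨hrs, hs2r, hs1⟩ := sqrt_facts hr0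
  have hs2r := hs2r hr
  have hs0 : (0:ℝ) < s := lt_of_lt_of_le one_pos hs1
  set m : ℝ := (n:ℝ) - 1 with hm
  have hm0 : 0 ≤ m := by simp [hm]; exact_mod_cast hn
  have hpow : (r : ℝ) ^ (n-1) = r ^ m := by
    rw [show m = ((n-1 : ℕ) : ℝ) by rw [hm, Nat.cast_sub hn, Nat.cast_one],
      Real.rpow_natCast]
  have hsplit : s ^ (2*(lam:ℝ)+n-1) = s ^ (2*(lam:ℝ)) * s ^ m := by
    rw [← Real.rpow_add hs0]; congr 1; rw [hm]; ring
  set L : ℝ := s ^ (2*(lam:ℝ)) with hL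
  have hL0 : 0 < L := Real.rpow_pos_of_pos hs0 _
  have hrm0 : (0:ℝ) < r ^ m := Real.rpow_pos_of_pos hr0 _
  have hsm0 : (0:ℝ) < s ^ m := Real.rpow_pos_of_pos hs0 _
  have h2n : (2:ℝ) ≤ 2 ^ n := by
    calc (2:ℝ) = 2 ^ 1 := (pow_one 2).symm
    _ ≤ 2 ^ n := pow_le_pow_right₀ one_le_two hn
  have hrmsm : r ^ m ≤ s ^ m := Real.rpow_le_rpow hr0.le hrs hm0
  have hsm2m : s ^ m ≤ 2 ^ m * r ^ m := by
    calc s ^ m ≤ (2*r) ^ m := Real.rpow_le_rpow hs0.le hs2r hm0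
    _ = 2 ^ m * r ^ m := Real.mul_rpow (by norm_num) hr0.le
  have h2m : (2:ℝ) ^ m ≤ 2 ^ n := by
    calc (2:ℝ) ^ m ≤ 2 ^ (n:ℝ) := Real.rpow_le_rpow_of_exponent_le one_le_two (by rw [hm]; linarith)
    _ = 2 ^ n := Real.rpow_natCast 2 n
  have core1 : r ^ m * s ≤ 2 ^ n * (r * s ^ m) := by
    calc r ^ m * s ≤ s ^ m * (2 * r) := mul_le_mul hrmsm hs2r hs0.le hsm0.le
    _ = 2 * (r * s ^ m) := by ring
    _ ≤ 2 ^ n * (r * s ^ m) := mul_le_mul_of_nonneg_right h2n (by positivity)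
  have core2 : r * s ^ m ≤ 2 ^ n * (r ^ m * s) := by
    calc r * s ^ m ≤ r * (2 ^ m * r ^ m) := mul_le_mul_of_nonneg_left hsm2m hr0.le
    _ = 2 ^ m * (r ^ m * r) := by ring
    _ ≤ 2 ^ n * (r ^ m * s) :=
        mul_le_mul h2m (mul_le_mul_of_nonneg_left hrs hrm0.le) (by positivity) (by positivity)
  constructor
  · have hmul := mul_le_mul_of_nonneg_right core1
      (show (0:ℝ) ≤ s⁻¹ * (L * w) by positivity)
    rw [hpow, hsplit]
    calc r ^ m * (L * w) = (r ^ m * s) * (s⁻¹ * (L * w)) := by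
          field_simp
    _ ≤ (2 ^ n * (r * s ^ m)) * (s⁻¹ * (L * w)) := hmul
    _ = 2 ^ n * ((r / s) * (L * s ^ m * w)) := by
          field_simp
  · have hmul := mul_le_mul_of_nonneg_right core2
      (show (0:ℝ) ≤ s⁻¹ * (L * w) by positivity)
    rw [hpow, hsplit]
    calc (r / s) * (L * s ^ m * w) = (r * s ^ m) * (s⁻¹ * (L * w)) := by
          field_simp
    _ ≤ (2 ^ n * (r ^ m * s)) * (s⁻¹ * (L * w)) := hmul
    _ = 2 ^ n * (r ^ m * (L * w)) := by field_simp

lemma sq_deriv (x : ℝ) :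
    HasDerivAt (fun r : ℝ => Real.sqrt (1 + r ^ 2)) (2 * x / (2 * Real.sqrt (1 + x ^ 2))) x := by
  have h1 : HasDerivAt (fun r : ℝ => 1 + r ^ 2) (2 * x) x := by
    simpa using (hasDerivAt_pow 2 x).const_add 1
  exact h1.sqrt (by positivity)

lemma sq_inj : InjOn (fun r : ℝ => Real.sqrt (1 + r ^ 2)) (Ioi 0) := by
  intro r1 h1 r2 h2 heq
  simp only [mem_Ioi] at h1 h2
  have e1 : 1 + r1 ^ 2 = 1 + r2 ^ 2 := by
    have := congrArg (fun x : ℝ => x ^ 2) heq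
    simpa [Real.sq_sqrt, (by positivity : (0:ℝ) ≤ 1 + r1 ^ 2),
      Real.sq_sqrt (by positivity : (0:ℝ) ≤ 1 + r2 ^ 2)] using this
  nlinarith

lemma sq_image : (fun r : ℝ => Real.sqrt (1 + r ^ 2)) '' (Ioi 0) = Ioi 1 := by
  ext t
  constructor
  · rintro ⟨r, hr, rfl⟩
    simp only [mem_Ioi] at hr ⊢
    calc (1:ℝ) = Real.sqrt 1 := Real.sqrt_one.symm
    _ < Real.sqrt (1 + r ^ 2) := by
        apply Real.sqrt_lt_sqrt (by norm_num); nlinarith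
  · intro ht
    simp only [mem_Ioi] at ht
    refine ⟨Real.sqrt (t ^ 2 - 1), ?_, ?_⟩
    · simp only [mem_Ioi]
      apply Real.sqrt_pos.2; nlinarith
    · show Real.sqrt (1 + Real.sqrt (t ^ 2 - 1) ^ 2) = t
      rw [Real.sq_sqrt (by nlinarith : (0:ℝ) ≤ t ^ 2 - 1)]
      rw [show 1 + (t ^ 2 - 1) = t ^ 2 by ring, Real.sqrt_sq (by linarith)]

lemma compare_aux (n lam : ℕ) (hn : 1 ≤ n) (ω' : ℝ → ℝ) (ε : ℝ) (hε : 0 < ε)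
    (hlow : ∀ t : ℝ, 1 ≤ t → t ≤ 2 → ε ≤ ω' t) :
    (∫⁻ r in Ioi (0:ℝ), ENNReal.ofReal (r ^ (n-1)) *
        ENNReal.ofReal (Real.sqrt (1+r^2) ^ (2*(lam:ℝ)) * ((ω' (Real.sqrt (1+r^2)))⁻¹)^2) ≠ ⊤) ↔
      (∫⁻ r in Ioi (0:ℝ), ENNReal.ofReal |2*r/(2*Real.sqrt (1+r^2))| *
        ENNReal.ofReal (Real.sqrt (1+r^2) ^ (2*(lam:ℝ)+(n:ℝ)-1) * ((ω' (Real.sqrt (1+r^2)))⁻¹)^2) ≠ ⊤) := by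
  set P : ℝ → ENNReal := fun r => ENNReal.ofReal (r ^ (n-1)) *
      ENNReal.ofReal (Real.sqrt (1+r^2) ^ (2*(lam:ℝ)) * ((ω' (Real.sqrt (1+r^2)))⁻¹)^2) with hPdef
  set Q : ℝ → ENNReal := fun r => ENNReal.ofReal |2*r/(2*Real.sqrt (1+r^2))| *
      ENNReal.ofReal (Real.sqrt (1+r^2) ^ (2*(lam:ℝ)+(n:ℝ)-1) * ((ω' (Real.sqrt (1+r^2)))⁻¹)^2) with hQdef
  have hn1 : (1:ℝ) ≤ (n:ℝ) := by exact_mod_cast hn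
  have habs : ∀ r : ℝ, 0 < r → |2*r/(2*Real.sqrt (1+r^2))| = r / Real.sqrt (1+r^2) := by
    intro r hr
    have hs0 : (0:ℝ) < Real.sqrt (1+r^2) := (sqrt_facts hr).2.2.trans_lt' one_pos
    rw [abs_of_nonneg (by positivity)]
    ring_nf
  -- decomposition
  have hsplit : ∀ X : ℝ → ENNReal,
      ∫⁻ r in Ioi (0:ℝ), X r = (∫⁻ r in Ioc (0:ℝ) 1, X r) + ∫⁻ r in Ioi (1:ℝ), X r := by
    intro X
    rw [← Ioc_union_Ioi_eq_Ioi (zero_le_one : (0:ℝ) ≤ 1),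
      lintegral_union measurableSet_Ioi (Ioc_disjoint_Ioi le_rfl)]
  -- bound near zero
  set C : ENNReal := ENNReal.ofReal ((2:ℝ) ^ (2*(lam:ℝ) + n) * (ε⁻¹)^2) with hCdef
  have hbnd : ∀ r ∈ Ioc (0:ℝ) 1, P r ≤ C ∧ Q r ≤ C := by
    rintro r ⟨hr0, hr1⟩
    obtain ⟨hrs, -, hs1⟩ := sqrt_facts hr0
    set s := Real.sqrt (1+r^2) with hsdef
    have hs0 : (0:ℝ) < s := lt_of_lt_of_le one_pos hs1
    have hs2 : s ≤ 2 := by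
      calc s ≤ Real.sqrt 4 := Real.sqrt_le_sqrt (by nlinarith)
      _ = 2 := by rw [show (4:ℝ) = 2^2 by norm_num, Real.sqrt_sq (by norm_num : (0:ℝ) ≤ 2)]
    have hωs : ε ≤ ω' s := hlow s hs1 hs2
    have hωs0 : 0 < ω' s := lt_of_lt_of_le hε hωs
    have hinv : (ω' s)⁻¹ ≤ ε⁻¹ := by gcongr
    have hw : ((ω' s)⁻¹)^2 ≤ (ε⁻¹)^2 :=
      pow_le_pow_left₀ (by positivity) hinv 2
    have hsle : ∀ e : ℝ, 0 ≤ e → e ≤ 2*(lam:ℝ) + n → s ^ e * ((ω' s)⁻¹)^2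
        ≤ (2:ℝ) ^ (2*(lam:ℝ) + n) * (ε⁻¹)^2 := by
      intro e he0 hele
      have h1 : s ^ e ≤ (2:ℝ) ^ e := Real.rpow_le_rpow (Real.sqrt_nonneg _) hs2 he0
      have h2 : (2:ℝ) ^ e ≤ (2:ℝ) ^ (2*(lam:ℝ) + n) :=
        Real.rpow_le_rpow_of_exponent_le one_le_two hele
      exact mul_le_mul (h1.trans h2) hw (by positivity) (by positivity)
    constructor
    · calc P r ≤ ENNReal.ofReal 1 * ENNReal.ofReal ((2:ℝ) ^ (2*(lam:ℝ) + n) * (ε⁻¹)^2) := by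
            refine mul_le_mul' (ENNReal.ofReal_le_ofReal ?_) (ENNReal.ofReal_le_ofReal ?_)
            · exact pow_le_one₀ hr0.le hr1
            · exact hsle _ (by positivity) (by linarith)
      _ = C := by rw [ENNReal.ofReal_one, one_mul]
    · calc Q r ≤ ENNReal.ofReal 1 * ENNReal.ofReal ((2:ℝ) ^ (2*(lam:ℝ) + n) * (ε⁻¹)^2) := by
            refine mul_le_mul' (ENNReal.ofReal_le_ofReal ?_) (ENNReal.ofReal_le_ofReal ?_)
            · rw [habs r hr0]
              exact (div_le_one hs0).2 (hr1.trans hs1)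
            · exact hsle _ (by linarith) (by linarith)
      _ = C := by rw [ENNReal.ofReal_one, one_mul]
  have hfin : ∀ X : ℝ → ENNReal, (∀ r ∈ Ioc (0:ℝ) 1, X r ≤ C) →
      ∫⁻ r in Ioc (0:ℝ) 1, X r ≠ ⊤ := by
    intro X hX
    have h1 : ∫⁻ r in Ioc (0:ℝ) 1, X r ≤ C * volume (Ioc (0:ℝ) 1) := by
      calc ∫⁻ r in Ioc (0:ℝ) 1, X r ≤ ∫⁻ _ in Ioc (0:ℝ) 1, C := setLIntegral_mono' measurableSet_Ioc hX
      _ = C * volume (Ioc (0:ℝ) 1) := by rw [setLIntegral_const]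
    refine ne_top_of_le_ne_top ?_ h1
    exact ENNReal.mul_ne_top ENNReal.ofReal_ne_top (by simp [Real.volume_Ioc])
  -- pointwise comparison on Ioi 1
  set K : ENNReal := ENNReal.ofReal ((2:ℝ) ^ n) with hKdef
  have hKne : K ≠ ⊤ := ENNReal.ofReal_ne_top
  have hcmp : ∀ r ∈ Ioi (1:ℝ), P r ≤ K * Q r ∧ Q r ≤ K * P r := by
    intro r hr
    have hr1 : (1:ℝ) ≤ r := le_of_lt hr
    have hr0 : (0:ℝ) < r := lt_of_lt_of_le one_pos hr1
    have hw0 : (0:ℝ) ≤ ((ω' (Real.sqrt (1+r^2)))⁻¹)^2 := sq_nonneg _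
    obtain ⟨hcore1, hcore2⟩ := core_ineq n lam hn (((ω' (Real.sqrt (1+r^2)))⁻¹)^2) r hw0 hr1
    have hs0 : (0:ℝ) < Real.sqrt (1+r^2) := (sqrt_facts hr0).2.2.trans_lt' one_pos
    have hF0 : (0:ℝ) ≤ Real.sqrt (1+r^2) ^ (2*(lam:ℝ)) * ((ω' (Real.sqrt (1+r^2)))⁻¹)^2 := by positivity
    have hG0 : (0:ℝ) ≤ Real.sqrt (1+r^2) ^ (2*(lam:ℝ)+(n:ℝ)-1) * ((ω' (Real.sqrt (1+r^2)))⁻¹)^2 := by positivity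
    have hPr : P r = ENNReal.ofReal (r ^ (n-1) *
        (Real.sqrt (1+r^2) ^ (2*(lam:ℝ)) * ((ω' (Real.sqrt (1+r^2)))⁻¹)^2)) := by
      simp only [hPdef]
      rw [← ENNReal.ofReal_mul (by positivity)]
    have hQr : Q r = ENNReal.ofReal ((r / Real.sqrt (1+r^2)) *
        (Real.sqrt (1+r^2) ^ (2*(lam:ℝ)+(n:ℝ)-1) * ((ω' (Real.sqrt (1+r^2)))⁻¹)^2)) := by
      simp only [hQdef]
      rw [habs r hr0, ← ENNReal.ofReal_mul (by positivity)]
    constructor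
    · rw [hPr, hQr, ← ENNReal.ofReal_mul (by positivity : (0:ℝ) ≤ (2:ℝ)^n)]
      exact ENNReal.ofReal_le_ofReal hcore1
    · rw [hPr, hQr, ← ENNReal.ofReal_mul (by positivity : (0:ℝ) ≤ (2:ℝ)^n)]
      exact ENNReal.ofReal_le_ofReal hcore2
  -- assemble
  have main : ∀ X Y : ℝ → ENNReal, (∀ r ∈ Ioc (0:ℝ) 1, Y r ≤ C) →
      (∀ r ∈ Ioi (1:ℝ), Y r ≤ K * X r) →
      (∫⁻ r in Ioi (0:ℝ), X r ≠ ⊤) → (∫⁻ r in Ioi (0:ℝ), Y r ≠ ⊤) := by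
    intro X Y hYC hYX hX
    rw [hsplit X] at hX
    rw [hsplit Y]
    refine ENNReal.add_ne_top.2 ⟨hfin Y hYC, ?_⟩
    have h1 : ∫⁻ r in Ioi (1:ℝ), Y r ≤ K * ∫⁻ r in Ioi (1:ℝ), X r := by
      calc ∫⁻ r in Ioi (1:ℝ), Y r ≤ ∫⁻ r in Ioi (1:ℝ), K * X r :=
            setLIntegral_mono' measurableSet_Ioi hYX
      _ = K * ∫⁻ r in Ioi (1:ℝ), X r := lintegral_const_mul' _ _ hKne
    exact ne_top_of_le_ne_top (ENNReal.mul_ne_top hKne (ENNReal.add_ne_top.1 hX).2) h1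
  exact ⟨main P Q (fun r hr => (hbnd r hr).2) (fun r hr => (hcmp r hr).2),
    main Q P (fun r hr => (hbnd r hr).1) (fun r hr => (hcmp r hr).1)⟩


/-- For `ω` RO-varying, `λ ≥ 0` an integer and `n ≥ 1`:
`∫_{ℝⁿ} ⟨ξ⟩^{2λ} ω(⟨ξ⟩)⁻² dξ < ∞  ↔  ∫₁^∞ t^{2λ+n-1} ω(t)⁻² dt < ∞`. -/
theorem integrable_smoothedNorm_iff (n lam : ℕ) (hn : 1 ≤ n) (ω : ℝ → ℝ)
    (hω : IsRO ω) :
    Integrable (fun ξ : EuclideanSpace ℝ (Fin n) =>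
        smoothedNorm ξ ^ (2 * (lam : ℝ)) * ((ω (smoothedNorm ξ))⁻¹) ^ 2) ↔
      IntegrableOn (fun t : ℝ => t ^ (2 * (lam : ℝ) + n - 1) * ((ω t)⁻¹) ^ 2)
        (Set.Ici (1:ℝ)) := by
  classical
  set E := EuclideanSpace ℝ (Fin n)
  haveI : Nonempty (Fin n) := ⟨⟨0, by omega⟩⟩
  haveI : Nontrivial E := inferInstance
  set ω' : ℝ → ℝ := fun t => ω (max t 1) with hω'def
  have hω'meas : Measurable ω' := measurable_omax hω.1
  have hω'eq : ∀ t : ℝ, 1 ≤ t → ω' t = ω t := fun t ht => by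
    simp only [hω'def, max_eq_left ht]
  set F : ℝ → ℝ := fun t => t ^ (2*(lam:ℝ)) * ((ω' t)⁻¹)^2 with hFdef
  set G : ℝ → ℝ := fun t => t ^ (2*(lam:ℝ) + (n:ℝ) - 1) * ((ω' t)⁻¹)^2 with hGdef
  have hFmeas : Measurable F := by fun_prop
  have hGmeas : Measurable G := by fun_prop
  have hsmCont : Continuous fun ξ : E => smoothedNorm ξ := by
    unfold smoothedNorm
    exact Real.continuous_sqrt.comp (continuous_const.add ((continuous_norm).pow 2))
  have hsm1 : ∀ ξ : E, 1 ≤ smoothedNorm ξ := fun ξ => by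
    unfold smoothedNorm
    calc (1:ℝ) = Real.sqrt 1 := Real.sqrt_one.symm
    _ ≤ _ := Real.sqrt_le_sqrt (le_add_of_nonneg_right (sq_nonneg _))
  -- left side rewriting
  have hLfun : (fun ξ : E => smoothedNorm ξ ^ (2*(lam:ℝ)) * ((ω (smoothedNorm ξ))⁻¹)^2)
      = fun ξ : E => F (smoothedNorm ξ) := by
    funext ξ
    simp only [hFdef, hω'eq _ (hsm1 ξ)]
  have hΦm : Measurable fun ξ : E => F (smoothedNorm ξ) := hFmeas.comp hsmCont.measurable
  have hΦ0 : 0 ≤ᵐ[(volume : Measure E)] fun ξ : E => F (smoothedNorm ξ) :=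
    ae_of_all _ fun ξ => by
      have h1 := hsm1 ξ
      have h0 : (0:ℝ) ≤ smoothedNorm ξ := by linarith
      simp only [hFdef]
      positivity
  have hLiff : Integrable (fun ξ : E => F (smoothedNorm ξ)) ↔
      ∫⁻ ξ : E, ENNReal.ofReal (F (smoothedNorm ξ)) ≠ ⊤ :=
    (lintegral_ofReal_ne_top_iff_integrable hΦm.aestronglyMeasurable hΦ0).symm
  -- polar coordinates
  have hfm : Measurable fun y : ℝ => ENNReal.ofReal (F (Real.sqrt (1 + y ^ 2))) := by
    apply Measurable.ennreal_ofReal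
    exact hFmeas.comp (Real.continuous_sqrt.comp (continuous_const.add (continuous_pow 2))).measurable
  have hrank : Module.finrank ℝ E = n := finrank_euclideanSpace_fin
  have hpolar := lintegral_fun_norm_aux (volume : Measure E)
    (fun y : ℝ => ENNReal.ofReal (F (Real.sqrt (1 + y ^ 2)))) hfm
  rw [hrank] at hpolar
  have hcomp : (fun ξ : E => ENNReal.ofReal (F (smoothedNorm ξ)))
      = fun ξ : E => ENNReal.ofReal (F (Real.sqrt (1 + ‖ξ‖ ^ 2))) := rfl
  set S := (volume : Measure E).toSphere univ with hSdef
  have hS_ne_top : S ≠ ⊤ := measure_ne_top _ _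
  have hS_ne_zero : S ≠ 0 := by
    rw [hSdef, Measure.toSphere_apply_univ, hrank]
    refine mul_ne_zero ?_ ?_
    · exact (Nat.cast_ne_zero (R := ENNReal)).2 (by omega)
    · exact (Metric.measure_ball_pos _ _ one_pos).ne'
  have hLlint : (∫⁻ ξ : E, ENNReal.ofReal (F (smoothedNorm ξ))) =
      S * ∫⁻ r in Ioi (0:ℝ), ENNReal.ofReal (r ^ (n-1)) *
        ENNReal.ofReal (F (Real.sqrt (1 + r ^ 2))) := by
    rw [hcomp]
    exact hpolar
  -- right side
  have hGae : (fun t : ℝ => t ^ (2*(lam:ℝ) + (n:ℝ) - 1) * ((ω t)⁻¹)^2)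
      =ᵐ[volume.restrict (Ici (1:ℝ))] G := by
    filter_upwards [ae_restrict_mem measurableSet_Ici] with t ht
    simp only [hGdef, hω'eq t ht]
  have hG0 : 0 ≤ᵐ[volume.restrict (Ici (1:ℝ))] G := by
    filter_upwards [ae_restrict_mem measurableSet_Ici] with t ht
    have h0 : (0:ℝ) ≤ t := le_trans zero_le_one ht
    simp only [hGdef]
    positivity
  have hRiff : IntegrableOn (fun t : ℝ => t ^ (2 * (lam : ℝ) + n - 1) * ((ω t)⁻¹) ^ 2)
      (Set.Ici (1:ℝ)) ↔ ∫⁻ t in Ici (1:ℝ), ENNReal.ofReal (G t) ≠ ⊤ := by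
    rw [IntegrableOn, integrable_congr hGae]
    exact (lintegral_ofReal_ne_top_iff_integrable hGmeas.aestronglyMeasurable hG0).symm
  -- change of variables
  have hIci : (∫⁻ t in Ici (1:ℝ), ENNReal.ofReal (G t)) =
      ∫⁻ t in Ioi (1:ℝ), ENNReal.ofReal (G t) := by
    rw [Measure.restrict_congr_set Ioi_ae_eq_Ici]
  have hchg := lintegral_image_eq_lintegral_abs_deriv_mul' (f := fun r : ℝ => Real.sqrt (1+r^2))
    (f' := fun x : ℝ => 2*x/(2*Real.sqrt (1+x^2))) measurableSet_Ioi
    (fun x _ => (sq_deriv x).hasDerivWithinAt) sq_inj (fun t => ENNReal.ofReal (G t))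
  rw [sq_image] at hchg
  -- assemble
  rw [hLfun, hLiff, hRiff, hIci, hchg, hLlint]
  have hmul : (S * ∫⁻ r in Ioi (0:ℝ), ENNReal.ofReal (r ^ (n-1)) *
      ENNReal.ofReal (F (Real.sqrt (1 + r ^ 2))) ≠ ⊤) ↔
      (∫⁻ r in Ioi (0:ℝ), ENNReal.ofReal (r ^ (n-1)) *
      ENNReal.ofReal (F (Real.sqrt (1 + r ^ 2))) ≠ ⊤) := by
    constructor
    · intro h hX
      rw [hX, ENNReal.mul_top hS_ne_zero] at h
      exact h rfl
    · intro h
      exact ENNReal.mul_ne_top hS_ne_top h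
  rw [hmul]
  obtain ⟨ε, hε, hlow⟩ := hω.lower_bound 2
  have hlow' : ∀ t : ℝ, 1 ≤ t → t ≤ 2 → ε ≤ ω' t := fun t ht ht2 => by
    rw [hω'eq t ht]; exact hlow t ht ht2
  exact compare_aux n lam hn ω' ε hε hlow'
end
end

section
/- For any φ in RO, the spaces H^φ and H^{1/φ} are in duality via the extension by continuity of the sesquilinear form (w₁,w₂) ↦ ∫_{ℝⁿ} w₁(x) conj(w₂(x)) dx from Schwartz functions: the map assigning to each v ∈ H^{1/φ} the functional w ↦ (w,v) is an anti-linear isomorphism of H^{1/φ} onto the dual of H^φ, with norm equal to ‖v‖_{1/φ}. -/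
open MeasureTheory Set
open scoped ENNReal NNReal

noncomputable section

/-- Membership of (the Fourier transform of) a distribution in the Hörmander space `H^φ`:
the Fourier-side representative `g` satisfies `∫ φ(⟨ξ⟩)² |g(ξ)|² dξ < ∞`. -/
def MemHorm {n : ℕ} (φ : ℝ → ℝ) (g : EuclideanSpace ℝ (Fin n) → ℂ) : Prop :=
  Integrable (fun ξ => (φ (smoothedNorm ξ)) ^ 2 * ‖g ξ‖ ^ 2)

/-- The square of the Hörmander norm `‖w‖_φ` of a distribution with Fourier transform `g`. -/
def hormNormSq {n : ℕ} (φ : ℝ → ℝ) (g : EuclideanSpace ℝ (Fin n) → ℂ) : ℝ :=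
  ∫ ξ, (φ (smoothedNorm ξ)) ^ 2 * ‖g ξ‖ ^ 2

/-- The measure `φ(⟨ξ⟩)² dξ` on `ℝⁿ`, so that (the Fourier-side model of) the
Hörmander space `H^φ` is `L²` of this measure. -/
def hormMeasure (n : ℕ) (φ : ℝ → ℝ) : Measure (EuclideanSpace ℝ (Fin n)) :=
  (volume : Measure (EuclideanSpace ℝ (Fin n))).withDensity
    fun ξ => ENNReal.ofReal ((φ (smoothedNorm ξ)) ^ 2)

lemma one_le_smoothedNorm {n : ℕ} (ξ : EuclideanSpace ℝ (Fin n)) : 1 ≤ smoothedNorm ξ := by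
  have h : (1:ℝ) ≤ 1 + ‖ξ‖ ^ 2 := le_add_of_nonneg_right (sq_nonneg _)
  calc (1:ℝ) = Real.sqrt 1 := Real.sqrt_one.symm
    _ ≤ Real.sqrt (1 + ‖ξ‖ ^ 2) := Real.sqrt_le_sqrt h

lemma measurable_smoothedNorm {n : ℕ} : Measurable (smoothedNorm (n := n)) :=
  (Real.continuous_sqrt.comp (continuous_const.add (continuous_norm.pow 2))).measurable

lemma nnnorm_sq_eq_ofReal {z : ℂ} :
    ((‖z‖₊ : ℝ≥0∞)) ^ ((2:ℝ≥0∞).toReal) = ENNReal.ofReal (‖z‖ ^ 2) := by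
  rw [← enorm_eq_nnnorm, ← ofReal_norm_eq_enorm, ENNReal.toReal_ofNat,
    ENNReal.ofReal_rpow_of_nonneg (norm_nonneg _) (by norm_num)]
  congr 1
  rw [show (2:ℝ) = ((2:ℕ):ℝ) by norm_num, Real.rpow_natCast]

/-- Duality of `H^φ` and `H^{1/φ}` (in the Fourier-side model, where the sesquilinear
pairing `(w₁,w₂) ↦ ∫ w₁ conj(w₂) dx` becomes, by Parseval, `∫ ŵ₁(ξ) conj(ŵ₂(ξ)) dξ`):
the map sending `v ∈ H^{1/φ}` to the functional `w ↦ (w,v)` is an anti-linear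
isometric bijection of `H^{1/φ}` onto the dual of `H^φ`. -/
theorem horm_duality (n : ℕ) (φ : ℝ → ℝ) (hφ : IsRO φ) :
    ∃ Φ : Lp ℂ 2 (hormMeasure n (fun t => (φ t)⁻¹)) →
        (Lp ℂ 2 (hormMeasure n φ) →L[ℂ] ℂ),
      Function.Bijective Φ ∧
      (∀ v, ‖Φ v‖ = ‖v‖) ∧
      (∀ v₁ v₂, Φ (v₁ + v₂) = Φ v₁ + Φ v₂) ∧
      (∀ (a : ℂ) v, Φ (a • v) = (starRingEnd ℂ a) • Φ v) ∧
      ∀ v w, Φ v w =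
        ∫ ξ, (w : EuclideanSpace ℝ (Fin n) → ℂ) ξ *
          (starRingEnd ℂ) ((v : EuclideanSpace ℝ (Fin n) → ℂ) ξ) := by
  obtain ⟨hmeas, hpos, -⟩ := hφ
  set M : EuclideanSpace ℝ (Fin n) → ℝ := fun ξ => φ (smoothedNorm ξ) with hMdef
  have hM : Measurable M := by
    have h1 : Measurable fun ξ : EuclideanSpace ℝ (Fin n) =>
        (⟨smoothedNorm ξ, one_le_smoothedNorm ξ⟩ : Ici (1:ℝ)) :=
      measurable_smoothedNorm.subtype_mk
    exact hmeas.comp h1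
  have hMpos : ∀ ξ, 0 < M ξ := fun ξ => hpos _ (one_le_smoothedNorm ξ)
  have hMne : ∀ ξ, (M ξ : ℂ) ≠ 0 := fun ξ => by
    exact_mod_cast Complex.ofReal_ne_zero.mpr (hMpos ξ).ne'
  set μp := hormMeasure n φ with hμpdef
  set μm := hormMeasure n fun t => (φ t)⁻¹ with hμmdef
  have hDp : Measurable fun ξ => ENNReal.ofReal (M ξ ^ 2) :=
    (hM.pow_const 2).ennreal_ofReal
  have hDm : Measurable fun ξ => ENNReal.ofReal ((M ξ)⁻¹ ^ 2) :=
    (hM.inv.pow_const 2).ennreal_ofReal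
  have hμp : μp = volume.withDensity fun ξ => ENNReal.ofReal (M ξ ^ 2) := rfl
  have hμm : μm = volume.withDensity fun ξ => ENNReal.ofReal ((M ξ)⁻¹ ^ 2) := rfl
  have hDpne : ∀ᵐ ξ ∂(volume : Measure (EuclideanSpace ℝ (Fin n))),
      ENNReal.ofReal (M ξ ^ 2) ≠ 0 :=
    ae_of_all _ fun ξ => by
      simp only [ne_eq, ENNReal.ofReal_eq_zero, not_le]
      exact pow_pos (hMpos ξ) 2
  have hDmne : ∀ᵐ ξ ∂(volume : Measure (EuclideanSpace ℝ (Fin n))),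
      ENNReal.ofReal ((M ξ)⁻¹ ^ 2) ≠ 0 :=
    ae_of_all _ fun ξ => by
      simp only [ne_eq, ENNReal.ofReal_eq_zero, not_le]
      exact pow_pos (inv_pos.mpr (hMpos ξ)) 2
  -- a.e. equality transfer
  have pv : ∀ {f g : EuclideanSpace ℝ (Fin n) → ℂ}, f =ᵐ[μp] g ↔ f =ᵐ[volume] g :=
    fun {f g} => by rw [hμp]; exact withDensity_ae_eq hDp.aemeasurable hDpne
  have mv : ∀ {f g : EuclideanSpace ℝ (Fin n) → ℂ}, f =ᵐ[μm] g ↔ f =ᵐ[volume] g :=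
    fun {f g} => by rw [hμm]; exact withDensity_ae_eq hDm.aemeasurable hDmne
  have hacpv : μp ≪ volume := hμp ▸ withDensity_absolutelyContinuous _ _
  have hacmv : μm ≪ volume := hμm ▸ withDensity_absolutelyContinuous _ _
  have hacvp : (volume : Measure (EuclideanSpace ℝ (Fin n))) ≪ μp :=
    hμp ▸ withDensity_absolutelyContinuous' hDp.aemeasurable hDpne
  have hacvm : (volume : Measure (EuclideanSpace ℝ (Fin n))) ≪ μm :=
    hμm ▸ withDensity_absolutelyContinuous' hDm.aemeasurable hDmne
  -- the multipliers
  set c : EuclideanSpace ℝ (Fin n) → ℂ := fun ξ => ((M ξ : ℂ) ^ 2)⁻¹ with hcdef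
  set c' : EuclideanSpace ℝ (Fin n) → ℂ := fun ξ => (M ξ : ℂ) ^ 2 with hc'def
  have hc : Measurable c := ((Complex.measurable_ofReal.comp hM).pow_const 2).inv
  have hc' : Measurable c' := (Complex.measurable_ofReal.comp hM).pow_const 2
  -- norm transfer
  have key : ∀ f : EuclideanSpace ℝ (Fin n) → ℂ,
      eLpNorm (fun ξ => f ξ * c ξ) 2 μp = eLpNorm f 2 μm := by
    intro f
    rw [eLpNorm_eq_lintegral_rpow_enorm_toReal two_ne_zero ENNReal.ofNat_ne_top,
      eLpNorm_eq_lintegral_rpow_enorm_toReal two_ne_zero ENNReal.ofNat_ne_top]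
    congr 1
    rw [hμp, hμm,
      lintegral_withDensity_eq_lintegral_mul_non_measurable _ hDp
        (ae_of_all _ fun ξ => ENNReal.ofReal_lt_top),
      lintegral_withDensity_eq_lintegral_mul_non_measurable _ hDm
        (ae_of_all _ fun ξ => ENNReal.ofReal_lt_top)]
    congr 1
    funext ξ
    simp only [Pi.mul_apply, enorm_eq_nnnorm, nnnorm_sq_eq_ofReal,
      ← ENNReal.ofReal_mul (sq_nonneg _)]
    congr 1
    have hMne' : M ξ ≠ 0 := (hMpos ξ).ne'
    have hnc : ‖c ξ‖ = ((M ξ) ^ 2)⁻¹ := by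
      simp [hcdef, norm_inv, abs_of_pos (hMpos ξ)]
    rw [norm_mul, hnc]
    field_simp
  have key' : ∀ f : EuclideanSpace ℝ (Fin n) → ℂ,
      eLpNorm (fun ξ => f ξ * c' ξ) 2 μm = eLpNorm f 2 μp := by
    intro f
    rw [eLpNorm_eq_lintegral_rpow_enorm_toReal two_ne_zero ENNReal.ofNat_ne_top,
      eLpNorm_eq_lintegral_rpow_enorm_toReal two_ne_zero ENNReal.ofNat_ne_top]
    congr 1
    rw [hμp, hμm,
      lintegral_withDensity_eq_lintegral_mul_non_measurable _ hDp
        (ae_of_all _ fun ξ => ENNReal.ofReal_lt_top),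
      lintegral_withDensity_eq_lintegral_mul_non_measurable _ hDm
        (ae_of_all _ fun ξ => ENNReal.ofReal_lt_top)]
    congr 1
    funext ξ
    simp only [Pi.mul_apply, enorm_eq_nnnorm, nnnorm_sq_eq_ofReal,
      ← ENNReal.ofReal_mul (sq_nonneg _)]
    congr 1
    have hMne' : M ξ ≠ 0 := (hMpos ξ).ne'
    have hnc : ‖c' ξ‖ = (M ξ) ^ 2 := by
      simp [hc'def, abs_of_pos (hMpos ξ)]
    rw [norm_mul, hnc]
    field_simp
  -- membership
  have mem_c : ∀ v : Lp ℂ 2 μm, MemLp (fun ξ => v ξ * c ξ) 2 μp := by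
    intro v
    refine ⟨(((Lp.aestronglyMeasurable v).mono_ac hacvm).mono_ac hacpv).mul
      hc.aestronglyMeasurable, ?_⟩
    rw [key]
    exact Lp.eLpNorm_lt_top v
  have mem_c' : ∀ w : Lp ℂ 2 μp, MemLp (fun ξ => w ξ * c' ξ) 2 μm := by
    intro w
    refine ⟨(((Lp.aestronglyMeasurable w).mono_ac hacvp).mono_ac hacmv).mul
      hc'.aestronglyMeasurable, ?_⟩
    rw [key']
    exact Lp.eLpNorm_lt_top w
  set T : Lp ℂ 2 μm → Lp ℂ 2 μp := fun v => (mem_c v).toLp _ with hTdef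
  set S : Lp ℂ 2 μp → Lp ℂ 2 μm := fun w => (mem_c' w).toLp _ with hSdef
  have coeT : ∀ v, (T v : EuclideanSpace ℝ (Fin n) → ℂ) =ᵐ[volume]
      fun ξ => v ξ * c ξ := fun v => pv.mp ((mem_c v).coeFn_toLp)
  have coeS : ∀ w, (S w : EuclideanSpace ℝ (Fin n) → ℂ) =ᵐ[volume]
      fun ξ => w ξ * c' ξ := fun w => mv.mp ((mem_c' w).coeFn_toLp)
  -- T S inverse
  have hTS : ∀ w, T (S w) = w := by
    intro w
    apply Lp.ext (μ := μp)
    rw [pv]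
    filter_upwards [coeT (S w), coeS w] with ξ h1 h2
    rw [h1, h2]
    simp only [hcdef, hc'def]
    field_simp [hMne ξ]
  have hST : ∀ v, S (T v) = v := by
    intro v
    apply Lp.ext (μ := μm)
    rw [mv]
    filter_upwards [coeS (T v), coeT v] with ξ h1 h2
    rw [h1, h2]
    simp only [hcdef, hc'def]
    field_simp [hMne ξ]
  have hTbij : Function.Bijective T :=
    Function.bijective_iff_has_inverse.mpr ⟨S, hST, hTS⟩
  -- T additive and ℂ-linear
  have hTadd : ∀ v₁ v₂, T (v₁ + v₂) = T v₁ + T v₂ := by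
    intro v₁ v₂
    apply Lp.ext (μ := μp)
    rw [pv]
    filter_upwards [coeT (v₁ + v₂), coeT v₁, coeT v₂, pv.mp (Lp.coeFn_add (T v₁) (T v₂)),
      mv.mp (Lp.coeFn_add v₁ v₂)] with ξ h1 h2 h3 h4 h5
    rw [h1, h4]
    simp only [Pi.add_apply, h2, h3, h5]
    ring
  have hTsmul : ∀ (a : ℂ) v, T (a • v) = a • T v := by
    intro a v
    apply Lp.ext (μ := μp)
    rw [pv]
    filter_upwards [coeT (a • v), coeT v, pv.mp (Lp.coeFn_smul a (T v)),
      mv.mp (Lp.coeFn_smul a v)] with ξ h1 h2 h3 h4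
    rw [h1, h3]
    simp only [Pi.smul_apply, h2, h4, smul_eq_mul]
    ring
  have hTnorm : ∀ v, ‖T v‖ = ‖v‖ := by
    intro v
    rw [hTdef]
    rw [Lp.norm_toLp, key, ← Lp.norm_def]
  -- the duality map
  refine ⟨fun v => InnerProductSpace.toDual ℂ (Lp ℂ 2 μp) (T v), ?_, ?_, ?_, ?_, ?_⟩
  · exact (InnerProductSpace.toDual ℂ (Lp ℂ 2 μp)).bijective.comp hTbij
  · intro v
    rw [LinearIsometryEquiv.norm_map, hTnorm]
  · intro v₁ v₂
    simp only [hTadd v₁ v₂, map_add]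
  · intro a v
    simp only [hTsmul a v, LinearIsometryEquiv.map_smulₛₗ]
  · intro v w
    rw [InnerProductSpace.toDual_apply_apply, L2.inner_def]
    have step1 : ∫ ξ, (inner ℂ ((T v) ξ) (w ξ) : ℂ) ∂μp
        = ∫ ξ, (starRingEnd ℂ) (v ξ * c ξ) * w ξ ∂μp := by
      refine integral_congr_ae ?_
      filter_upwards [pv.mpr (coeT v)] with ξ h1
      rw [RCLike.inner_apply, h1, mul_comm]
    rw [step1]
    have hint : ∫ ξ, (starRingEnd ℂ) (v ξ * c ξ) * w ξ ∂μp
        = ∫ ξ, (M ξ ^ 2).toNNReal • ((starRingEnd ℂ) (v ξ * c ξ) * w ξ) ∂volume :=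
      integral_withDensity_eq_integral_smul (hM.pow_const 2).real_toNNReal _
    rw [hint]
    refine integral_congr_ae (ae_of_all _ fun ξ => ?_)
    have hcoe : ((M ξ ^ 2).toNNReal : ℝ) = M ξ ^ 2 := Real.coe_toNNReal _ (sq_nonneg _)
    dsimp only
    rw [NNReal.smul_def, hcoe, Complex.real_smul]
    simp only [hcdef, map_mul, map_inv₀, map_pow, Complex.conj_ofReal]
    push_cast
    field_simp [hMne ξ]
end
end

section
/- Let φ be RO-varying with Matuszewska indices σ₀(φ), σ₁(φ), let s₀ < σ₀(φ) and s₁ > σ₁(φ), and define ψ(t) = t^{-s₀/(s₁-s₀)} φ(t^{1/(s₁-s₀)}) for t ≥ 1 and ψ(t) = φ(1) for 0 < t < 1. Then ψ is pseudo-concave near infinity, i.e. there is a positive concave function ψ₁ with ψ(t) ≍ ψ₁(t) for large t. -/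
open MeasureTheory Set

noncomputable section

/-- The lower Matuszewska index `σ₀(φ)`. -/
def matuszewskaLower (φ : ℝ → ℝ) : ℝ :=
  sSup {s : ℝ | ∃ c : ℝ, 1 ≤ c ∧ ∀ t : ℝ, 1 ≤ t → ∀ l : ℝ, 1 ≤ l →
    c⁻¹ * l ^ s ≤ φ (l * t) / φ t}

/-- The upper Matuszewska index `σ₁(φ)`. -/
def matuszewskaUpper (φ : ℝ → ℝ) : ℝ :=
  sInf {s : ℝ | ∃ c : ℝ, 1 ≤ c ∧ ∀ t : ℝ, 1 ≤ t → ∀ l : ℝ, 1 ≤ l →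
    φ (l * t) / φ t ≤ c * l ^ s}

/-- If `c·l^s ≤ C·l^σ` for all `l ≥ 1`, then `s ≤ σ`. -/
lemma exp_comp_aux {c C s σ : ℝ} (hc : 0 < c) (hC : 0 < C)
    (h : ∀ l : ℝ, 1 ≤ l → c * l ^ s ≤ C * l ^ σ) : s ≤ σ := by
  by_contra hlt
  push_neg at hlt
  have hd0 : 0 < s - σ := sub_pos.mpr hlt
  set l : ℝ := (C / c + 1) ^ (s - σ)⁻¹ with hl
  have hbase : (1:ℝ) < C / c + 1 := by
    have : 0 < C / c := div_pos hC hc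
    linarith
  have hl1 : 1 ≤ l := Real.one_le_rpow hbase.le (by positivity)
  have hl0 : 0 < l := lt_of_lt_of_le one_pos hl1
  have hld : l ^ (s - σ) = C / c + 1 := by
    rw [hl, ← Real.rpow_mul (by linarith), inv_mul_cancel₀ hd0.ne', Real.rpow_one]
  have hsplit : l ^ s = l ^ (s - σ) * l ^ σ := by
    rw [← Real.rpow_add hl0]; ring_nf
  have hσ0 : 0 < l ^ σ := Real.rpow_pos_of_pos hl0 σ
  have := h l hl1
  rw [hsplit, hld] at this
  -- c * ((C/c+1) * l^σ) ≤ C * l^σ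
  have : c * (C / c + 1) ≤ C := by
    have := (mul_le_mul_iff_of_pos_right hσ0).mp (by linarith [this] : (c * (C / c + 1)) * l ^ σ ≤ C * l ^ σ)
    exact this
  have hcc : c * (C / c + 1) = C + c := by field_simp
  linarith

/-- RO functions have polynomial-type bounds for all `l ≥ 1`. -/
lemma ro_polybound {φ : ℝ → ℝ} (hφ : IsRO φ) :
    ∃ C : ℝ, 1 ≤ C ∧ ∃ σ : ℝ, 0 ≤ σ ∧ ∀ t : ℝ, 1 ≤ t → ∀ l : ℝ, 1 ≤ l →
      C⁻¹ * l ^ (-σ) ≤ φ (l * t) / φ t ∧ φ (l * t) / φ t ≤ C * l ^ σ := by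
  obtain ⟨-, hpos, a, ha, c, hc, hRO⟩ := hφ
  have ha0 : (0:ℝ) < a := lt_trans one_pos ha
  have hc0 : (0:ℝ) < c := lt_of_lt_of_le one_pos hc
  have hla : 0 < Real.log a := Real.log_pos ha
  refine ⟨c, hc, Real.log c / Real.log a, div_nonneg (Real.log_nonneg hc) hla.le, ?_⟩
  have key : ∀ k : ℕ, ∀ t : ℝ, 1 ≤ t → ∀ l : ℝ, 1 ≤ l → l ≤ a ^ (k+1) →
      (c ^ (k+1))⁻¹ ≤ φ (l * t) / φ t ∧ φ (l * t) / φ t ≤ c ^ (k+1) := by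
    intro k
    induction k with
    | zero =>
      intro t ht l hl1 hl2
      have := hRO t ht l ⟨hl1, by simpa using hl2⟩
      simpa using this
    | succ k ih =>
      intro t ht l hl1 hl2
      have hmono : c ^ (k+1) ≤ c ^ (k+2) := pow_le_pow_right₀ hc (by omega)
      by_cases hcase : l ≤ a ^ (k+1)
      · obtain ⟨h1, h2⟩ := ih t ht l hl1 hcase
        constructor
        · exact le_trans (inv_anti₀ (by positivity) hmono) h1
        · exact h2.trans hmono
      · push_neg at hcase
        have hak : a ≤ a ^ (k+1) := le_self_pow₀ ha.le (by omega)
        have hm1 : 1 ≤ l / a := by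
          rw [le_div_iff₀ ha0, one_mul]; linarith
        have hm2 : l / a ≤ a ^ (k+1) := by
          rw [div_le_iff₀ ha0]
          calc l ≤ a ^ (k+2) := hl2
            _ = a ^ (k+1) * a := by ring
        obtain ⟨h1, h2⟩ := ih t ht (l/a) hm1 hm2
        have hmt : 1 ≤ l / a * t := one_le_mul_of_one_le_of_one_le hm1 ht
        obtain ⟨g1, g2⟩ := hRO (l/a*t) hmt a ⟨ha.le, le_refl a⟩
        have heq : a * (l/a*t) = l * t := by field_simp
        have hne : (0:ℝ) < φ (l/a*t) := hpos _ hmt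
        have hpt : (0:ℝ) < φ t := hpos t ht
        have hsplit : φ (l*t) / φ t = φ (a*(l/a*t)) / φ (l/a*t) * (φ (l/a*t) / φ t) := by
          rw [heq, div_mul_div_cancel₀ hne.ne']
        rw [hsplit]
        have hg1nn : (0:ℝ) ≤ φ (a*(l/a*t)) / φ (l/a*t) :=
          le_trans (by positivity) g1
        constructor
        · have hinv : (c ^ (k+2))⁻¹ = c⁻¹ * (c ^ (k+1))⁻¹ := by
            rw [← mul_inv]; ring_nf
          rw [hinv]
          exact mul_le_mul g1 h1 (by positivity) hg1nn
        · calc (φ (a*(l/a*t)) / φ (l/a*t)) * (φ (l/a*t) / φ t) ≤ c * c ^ (k+1) :=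
              mul_le_mul g2 h2 (by positivity) hc0.le
            _ = c ^ (k+2) := by ring
  intro t ht l hl1
  have hl0 : (0:ℝ) < l := lt_of_lt_of_le one_pos hl1
  set k : ℕ := ⌊Real.log l / Real.log a⌋₊ with hk
  have hfl : Real.log l / Real.log a < k + 1 := Nat.lt_floor_add_one _
  have hnn : 0 ≤ Real.log l / Real.log a := div_nonneg (Real.log_nonneg hl1) hla.le
  have hkle : (k:ℝ) ≤ Real.log l / Real.log a := Nat.floor_le hnn
  have hlk : l ≤ a ^ (k+1) := by
    have h1 : Real.log l < (k+1) * Real.log a := by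
      rw [div_lt_iff₀ hla] at hfl; push_cast at hfl ⊢; linarith
    have h2 : Real.log l < Real.log (a ^ (k+1)) := by
      rw [Real.log_pow]; push_cast; linarith
    exact le_of_lt ((Real.log_lt_log_iff hl0 (by positivity)).mp h2)
  obtain ⟨h1, h2⟩ := key k t ht l hl1 hlk
  have hck : c ^ (k+1) ≤ c * l ^ (Real.log c / Real.log a) := by
    have e1 : (c:ℝ) ^ k = c ^ (k:ℝ) := (Real.rpow_natCast c k).symm
    have e2 : c ^ (k:ℝ) ≤ c ^ (Real.log l / Real.log a) :=
      Real.rpow_le_rpow_of_exponent_le hc hkle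
    have e3 : c ^ (Real.log l / Real.log a) = l ^ (Real.log c / Real.log a) := by
      rw [Real.rpow_def_of_pos hc0, Real.rpow_def_of_pos hl0]
      congr 1; ring
    calc c ^ (k+1) = c * c ^ k := by ring
      _ ≤ c * l ^ (Real.log c / Real.log a) := by
        rw [e1]
        exact mul_le_mul_of_nonneg_left (e3 ▸ e2) hc0.le
  constructor
  · have hinv : c⁻¹ * l ^ (-(Real.log c / Real.log a)) = (c * l ^ (Real.log c / Real.log a))⁻¹ := by
      rw [Real.rpow_neg hl0.le, mul_inv]
    rw [hinv]
    exact le_trans (inv_anti₀ (by positivity) hck) h1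
  · exact h2.trans hck

/-- Two-sided power bound with exponents `s₀ < s₁`. -/
lemma ro_two_exp {φ : ℝ → ℝ} (hφ : IsRO φ) {s₀ s₁ : ℝ}
    (hs₀ : s₀ < matuszewskaLower φ) (hs₁ : matuszewskaUpper φ < s₁) :
    s₀ < s₁ ∧ ∃ c : ℝ, 1 ≤ c ∧ ∀ t : ℝ, 1 ≤ t → ∀ l : ℝ, 1 ≤ l →
      c⁻¹ * l ^ s₀ ≤ φ (l * t) / φ t ∧ φ (l * t) / φ t ≤ c * l ^ s₁ := by
  obtain ⟨C, hC, σ, hσ, hCb⟩ := ro_polybound hφ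
  have hC0 : (0:ℝ) < C := lt_of_lt_of_le one_pos hC
  set L := {s : ℝ | ∃ c : ℝ, 1 ≤ c ∧ ∀ t : ℝ, 1 ≤ t → ∀ l : ℝ, 1 ≤ l →
    c⁻¹ * l ^ s ≤ φ (l * t) / φ t} with hL
  set U := {s : ℝ | ∃ c : ℝ, 1 ≤ c ∧ ∀ t : ℝ, 1 ≤ t → ∀ l : ℝ, 1 ≤ l →
    φ (l * t) / φ t ≤ c * l ^ s} with hU
  have hLne : (-σ) ∈ L := ⟨C, hC, fun t ht l hl => (hCb t ht l hl).1⟩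
  have hUne : σ ∈ U := ⟨C, hC, fun t ht l hl => (hCb t ht l hl).2⟩
  have hLbdd : BddAbove L := by
    refine ⟨σ, fun s hs => ?_⟩
    obtain ⟨c', hc', hb⟩ := hs
    refine exp_comp_aux (by positivity : (0:ℝ) < c'⁻¹) hC0 fun l hl => ?_
    exact le_trans (hb 1 le_rfl l hl) (hCb 1 le_rfl l hl).2
  have hUbdd : BddBelow U := by
    refine ⟨-σ, fun s hs => ?_⟩
    obtain ⟨c', hc', hb⟩ := hs
    refine exp_comp_aux (by positivity : (0:ℝ) < C⁻¹) (by positivity : (0:ℝ) < c') fun l hl => ?_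
    exact le_trans (hCb 1 le_rfl l hl).1 (hb 1 le_rfl l hl)
  rw [matuszewskaLower, ← hL] at hs₀
  rw [matuszewskaUpper, ← hU] at hs₁
  obtain ⟨sl, hslL, hsl⟩ := (lt_csSup_iff hLbdd ⟨_, hLne⟩).mp hs₀
  obtain ⟨sh, hshU, hsh⟩ := (csInf_lt_iff hUbdd ⟨_, hUne⟩).mp hs₁
  obtain ⟨cl, hcl, hbl⟩ := hslL
  obtain ⟨ch, hch, hbh⟩ := hshU
  have hcl0 : (0:ℝ) < cl := lt_of_lt_of_le one_pos hcl
  have hch0 : (0:ℝ) < ch := lt_of_lt_of_le one_pos hch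
  have hslh : sl ≤ sh := by
    refine exp_comp_aux (by positivity : (0:ℝ) < cl⁻¹) hch0 fun l hl => ?_
    exact le_trans (hbl 1 le_rfl l hl) (hbh 1 le_rfl l hl)
  refine ⟨by linarith, max cl ch, le_trans hcl (le_max_left _ _), fun t ht l hl => ?_⟩
  have hl0 : (0:ℝ) < l := lt_of_lt_of_le one_pos hl
  have hm0 : (0:ℝ) < max cl ch := lt_of_lt_of_le hcl0 (le_max_left _ _)
  constructor
  · have h1 : (max cl ch)⁻¹ * l ^ s₀ ≤ cl⁻¹ * l ^ sl :=
      mul_le_mul (inv_anti₀ hcl0 (le_max_left _ _))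
        (Real.rpow_le_rpow_of_exponent_le hl hsl.le) (by positivity) (by positivity)
    exact h1.trans (hbl t ht l hl)
  · have h1 : ch * l ^ sh ≤ max cl ch * l ^ s₁ :=
      mul_le_mul (le_max_right _ _)
        (Real.rpow_le_rpow_of_exponent_le hl hsh.le) (by positivity) hm0.le
    exact (hbh t ht l hl).trans h1

/-- For `φ ∈ RO`, `s₀ < σ₀(φ)`, `s₁ > σ₁(φ)`, the interpolation parameter
`ψ(t) = t^{-s₀/(s₁-s₀)} φ(t^{1/(s₁-s₀)})` for `t ≥ 1`, `ψ(t) = φ(1)` for `0 < t < 1`,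
is pseudo-concave near infinity: there is a positive concave function `ψ₁` with
`ψ ≍ ψ₁` for large `t`. -/
theorem interp_param_pseudoConcave (φ : ℝ → ℝ) (hφ : IsRO φ)
    (s₀ s₁ : ℝ) (hs₀ : s₀ < matuszewskaLower φ) (hs₁ : matuszewskaUpper φ < s₁)
    (ψ : ℝ → ℝ)
    (hψ₁ : ∀ t : ℝ, 1 ≤ t → ψ t = t ^ (-s₀ / (s₁ - s₀)) * φ (t ^ (1 / (s₁ - s₀))))
    (hψ₂ : ∀ t : ℝ, 0 < t → t < 1 → ψ t = φ 1) :
    ∃ T : ℝ, 0 < T ∧ ∃ ψ₁ : ℝ → ℝ,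
      ConcaveOn ℝ (Set.Ici T) ψ₁ ∧ (∀ t : ℝ, T ≤ t → 0 < ψ₁ t) ∧
      ∃ c : ℝ, 1 ≤ c ∧ ∀ t : ℝ, T ≤ t →
        c⁻¹ * ψ₁ t ≤ ψ t ∧ ψ t ≤ c * ψ₁ t := by
  obtain ⟨hss, c, hc, hb⟩ := ro_two_exp hφ hs₀ hs₁
  have hpos := hφ.2.1
  have hc0 : (0:ℝ) < c := lt_of_lt_of_le one_pos hc
  set ρ : ℝ := s₁ - s₀ with hρdef
  have hρ : 0 < ρ := sub_pos.mpr hss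
  -- positivity of ψ on [1, ∞)
  have hψpos : ∀ t : ℝ, 1 ≤ t → 0 < ψ t := by
    intro t ht
    have ht0 : (0:ℝ) < t := lt_of_lt_of_le one_pos ht
    rw [hψ₁ t ht]
    exact mul_pos (Real.rpow_pos_of_pos ht0 _)
      (hpos _ (Real.one_le_rpow ht (by positivity)))
  -- key doubling estimate for ψ
  have hψbd : ∀ t : ℝ, 1 ≤ t → ∀ l : ℝ, 1 ≤ l →
      c⁻¹ * ψ t ≤ ψ (l * t) ∧ ψ (l * t) ≤ c * l * ψ t := by
    intro t ht l hl
    have ht0 : (0:ℝ) < t := lt_of_lt_of_le one_pos ht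
    have hl0 : (0:ℝ) < l := lt_of_lt_of_le one_pos hl
    set u : ℝ := t ^ (1/ρ) with hu
    set m : ℝ := l ^ (1/ρ) with hm
    have hu1 : 1 ≤ u := Real.one_le_rpow ht (by positivity)
    have hm1 : 1 ≤ m := Real.one_le_rpow hl (by positivity)
    have hφu : 0 < φ u := hpos u hu1
    obtain ⟨hlo, hhi⟩ := hb u hu1 m hm1
    have hφmu : 0 < φ (m * u) := hpos _ (one_le_mul_of_one_le_of_one_le hm1 hu1)
    have hlo' : c⁻¹ * m ^ s₀ * φ u ≤ φ (m * u) := by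
      have h := mul_le_mul_of_nonneg_right hlo hφu.le
      rwa [div_mul_cancel₀ _ hφu.ne'] at h
    have hhi' : φ (m * u) ≤ c * m ^ s₁ * φ u := by
      have h := mul_le_mul_of_nonneg_right hhi hφu.le
      rwa [div_mul_cancel₀ _ hφu.ne'] at h
    have hms0 : m ^ s₀ = l ^ (s₀ / ρ) := by
      rw [hm, ← Real.rpow_mul hl0.le]
      congr 1; ring
    have hms1 : m ^ s₁ = l ^ (s₁ / ρ) := by
      rw [hm, ← Real.rpow_mul hl0.le]
      congr 1; ring
    have h2 : l ^ (-s₀/ρ) * l ^ (s₀/ρ) = 1 := by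
      rw [← Real.rpow_add hl0, show -s₀/ρ + s₀/ρ = 0 by ring, Real.rpow_zero]
    have h3 : l ^ (-s₀/ρ) * l ^ (s₁/ρ) = l := by
      rw [← Real.rpow_add hl0, ← add_div,
        show -s₀ + s₁ = ρ from by rw [hρdef]; ring, div_self hρ.ne', Real.rpow_one]
    have e1 : ψ (l * t) = l ^ (-s₀/ρ) * t ^ (-s₀/ρ) * φ (m * u) := by
      rw [hψ₁ (l*t) (one_le_mul_of_one_le_of_one_le hl ht),
        Real.mul_rpow hl0.le ht0.le, Real.mul_rpow hl0.le ht0.le]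
    have e0 : ψ t = t ^ (-s₀/ρ) * φ u := hψ₁ t ht
    have hlp : (0:ℝ) < l ^ (-s₀/ρ) := Real.rpow_pos_of_pos hl0 _
    have htp : (0:ℝ) < t ^ (-s₀/ρ) := Real.rpow_pos_of_pos ht0 _
    constructor
    · rw [e1, e0]
      calc c⁻¹ * (t ^ (-s₀/ρ) * φ u)
          = (l ^ (-s₀/ρ) * l ^ (s₀/ρ)) * (c⁻¹ * (t ^ (-s₀/ρ) * φ u)) := by rw [h2, one_mul]
        _ = (l ^ (-s₀/ρ) * t ^ (-s₀/ρ)) * (c⁻¹ * l ^ (s₀/ρ) * φ u) := by ring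
        _ ≤ (l ^ (-s₀/ρ) * t ^ (-s₀/ρ)) * φ (m * u) := by
            apply mul_le_mul_of_nonneg_left _ (by positivity)
            rw [← hms0]; exact hlo'
    · rw [e1, e0]
      calc l ^ (-s₀/ρ) * t ^ (-s₀/ρ) * φ (m * u)
          ≤ (l ^ (-s₀/ρ) * t ^ (-s₀/ρ)) * (c * l ^ (s₁/ρ) * φ u) := by
            apply mul_le_mul_of_nonneg_left _ (by positivity)
            rw [← hms1]; exact hhi'
        _ = (l ^ (-s₀/ρ) * l ^ (s₁/ρ)) * (c * (t ^ (-s₀/ρ) * φ u)) := by ring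
        _ = c * l * (t ^ (-s₀/ρ) * φ u) := by rw [h3]; ring
  -- almost increasing / almost t-decreasing
  have hA : ∀ s t : ℝ, 1 ≤ s → s ≤ t → ψ s ≤ c * ψ t := by
    intro s t hs hst
    have hs0 : (0:ℝ) < s := lt_of_lt_of_le one_pos hs
    have hdiv : 1 ≤ t / s := (one_le_div hs0).mpr hst
    have := (hψbd s hs (t/s) hdiv).1
    rw [div_mul_cancel₀ _ hs0.ne'] at this
    rw [← inv_mul_le_iff₀ hc0]
    exact this
  have hB : ∀ s t : ℝ, 1 ≤ s → s ≤ t → ψ t * s ≤ c * (ψ s * t) := by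
    intro s t hs hst
    have hs0 : (0:ℝ) < s := lt_of_lt_of_le one_pos hs
    have hdiv : 1 ≤ t / s := (one_le_div hs0).mpr hst
    have := (hψbd s hs (t/s) hdiv).2
    rw [div_mul_cancel₀ _ hs0.ne'] at this
    have h2 : ψ t * s ≤ (c * (t/s) * ψ s) * s := mul_le_mul_of_nonneg_right this hs0.le
    calc ψ t * s ≤ (c * (t/s) * ψ s) * s := h2
      _ = c * (ψ s * t) := by field_simp
  -- the concave envelope
  set ψ₁ : ℝ → ℝ := fun t => sInf {y : ℝ | ∃ s : ℝ, 1 ≤ s ∧ y = ψ s + ψ s / s * t} with hψ₁def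
  have hne : ∀ t : ℝ, {y : ℝ | ∃ s : ℝ, 1 ≤ s ∧ y = ψ s + ψ s / s * t}.Nonempty :=
    fun t => ⟨ψ 1 + ψ 1 / 1 * t, 1, le_rfl, rfl⟩
  have hbdd : ∀ t : ℝ, 0 ≤ t → BddBelow {y : ℝ | ∃ s : ℝ, 1 ≤ s ∧ y = ψ s + ψ s / s * t} := by
    intro t ht
    refine ⟨0, fun y hy => ?_⟩
    obtain ⟨s, hs, rfl⟩ := hy
    have hs0 : (0:ℝ) < s := lt_of_lt_of_le one_pos hs
    have := hψpos s hs
    positivity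
  have hlow : ∀ t : ℝ, 1 ≤ t → c⁻¹ * ψ t ≤ ψ₁ t := by
    intro t ht
    have ht0 : (0:ℝ) < t := lt_of_lt_of_le one_pos ht
    refine le_csInf (hne t) fun y hy => ?_
    obtain ⟨s, hs, rfl⟩ := hy
    have hs0 : (0:ℝ) < s := lt_of_lt_of_le one_pos hs
    have hψs := hψpos s hs
    have hψt := hψpos t ht
    rcases le_total s t with hst | hts
    · have hBst := hB s t hs hst
      have key : c⁻¹ * ψ t ≤ ψ s / s * t := by
        rw [inv_mul_le_iff₀ hc0, show c * (ψ s / s * t) = c * (ψ s * t) / s by ring,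
          le_div_iff₀ hs0]
        exact hBst
      linarith
    · have hAts := hA t s ht hts
      have key : c⁻¹ * ψ t ≤ ψ s := by
        rw [inv_mul_le_iff₀ hc0]; exact hAts
      have h0 : 0 ≤ ψ s / s * t := by positivity
      linarith
  have hupp : ∀ t : ℝ, 1 ≤ t → ψ₁ t ≤ 2 * ψ t := by
    intro t ht
    have ht0 : (0:ℝ) < t := lt_of_lt_of_le one_pos ht
    have hmem : ψ t + ψ t / t * t ∈ {y : ℝ | ∃ s : ℝ, 1 ≤ s ∧ y = ψ s + ψ s / s * t} :=
      ⟨t, ht, rfl⟩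
    have := csInf_le (hbdd t ht0.le) hmem
    rw [div_mul_cancel₀ _ ht0.ne'] at this
    linarith
  refine ⟨1, one_pos, ψ₁, ?_, ?_, ?_⟩
  · refine ⟨convex_Ici 1, fun x hx y hy a b ha hb hab => ?_⟩
    simp only [smul_eq_mul]
    have hx1 : (1:ℝ) ≤ x := hx
    have hy1 : (1:ℝ) ≤ y := hy
    have hz1 : (1:ℝ) ≤ a * x + b * y := by nlinarith
    refine le_csInf (hne _) fun w hw => ?_
    obtain ⟨s, hs, rfl⟩ := hw
    have h1 : ψ₁ x ≤ ψ s + ψ s / s * x :=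
      csInf_le (hbdd x (by linarith)) ⟨s, hs, rfl⟩
    have h2 : ψ₁ y ≤ ψ s + ψ s / s * y :=
      csInf_le (hbdd y (by linarith)) ⟨s, hs, rfl⟩
    have e : ψ s + ψ s / s * (a * x + b * y)
        = a * (ψ s + ψ s / s * x) + b * (ψ s + ψ s / s * y) := by
      linear_combination (-(ψ s)) * hab
    rw [e]
    exact add_le_add (mul_le_mul_of_nonneg_left h1 ha) (mul_le_mul_of_nonneg_left h2 hb)
  · intro t ht
    have : (0:ℝ) < c⁻¹ * ψ t := by
      have := hψpos t ht; positivity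
    exact lt_of_lt_of_le this (hlow t ht)
  · refine ⟨max c 2, le_trans hc (le_max_left _ _), fun t ht => ?_⟩
    have hm0 : (0:ℝ) < max c 2 := lt_of_lt_of_le hc0 (le_max_left _ _)
    have hψt := hψpos t ht
    have hψ₁t : 0 < ψ₁ t := lt_of_lt_of_le (by positivity) (hlow t ht)
    constructor
    · rw [inv_mul_le_iff₀ hm0]
      have h2 : (2:ℝ) * ψ t ≤ max c 2 * ψ t :=
        mul_le_mul_of_nonneg_right (le_max_right _ _) hψt.le
      exact (hupp t ht).trans h2
    · have h1 : ψ t ≤ c * ψ₁ t := by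
        rw [← inv_mul_le_iff₀ hc0]; exact hlow t ht
      have h2 : c * ψ₁ t ≤ max c 2 * ψ₁ t :=
        mul_le_mul_of_nonneg_right (le_max_left _ _) hψ₁t.le
      exact h1.trans h2
end
end

section
/- Let X = [X₀,X₁] and Y = [Y₀,Y₁] be pairs of separable Hilbert spaces with continuous dense embeddings X₁ ↪ X₀ and Y₁ ↪ Y₀, and let T be a linear map on X₀ whose restrictions T : X_j → Y_j (j = 0,1) are bounded Fredholm operators with common kernel and equal index. Then for any interpolation parameter ψ, the operator T : X_ψ → Y_ψ is Fredholm with the same kernel and index, and its range equals Y_ψ ∩ T(X₀). -/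
open MeasureTheory Set

noncomputable section

/-- A bounded operator is Fredholm: finite-dimensional kernel, closed range,
finite-dimensional cokernel. -/
def IsFredholm {X Y : Type*} [NormedAddCommGroup X] [NormedSpace ℂ X]
    [NormedAddCommGroup Y] [NormedSpace ℂ Y] (T : X →L[ℂ] Y) : Prop :=
  FiniteDimensional ℂ (LinearMap.ker (T : X →ₗ[ℂ] Y)) ∧
  IsClosed (Set.range T) ∧
  FiniteDimensional ℂ (Y ⧸ LinearMap.range (T : X →ₗ[ℂ] Y))

/-- The index of a (Fredholm) operator: `dim ker T - dim coker T`. -/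
def fredholmIndex {X Y : Type*} [NormedAddCommGroup X] [NormedSpace ℂ X]
    [NormedAddCommGroup Y] [NormedSpace ℂ Y] (T : X →L[ℂ] Y) : ℤ :=
  (Module.finrank ℂ (LinearMap.ker (T : X →ₗ[ℂ] Y)) : ℤ) -
    (Module.finrank ℂ (Y ⧸ LinearMap.range (T : X →ₗ[ℂ] Y)) : ℤ)

/-- Auxiliary: a dense submodule containing a closed submodule of finite codimension
is the whole space. -/
lemma aux_dense_fin_codim {E : Type*} [NormedAddCommGroup E] [NormedSpace ℂ E]
    (W V : Submodule ℂ E) (hW : IsClosed (W : Set E)) (hfin : FiniteDimensional ℂ (E ⧸ W))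
    (hWV : W ≤ V) (hd : Dense (V : Set E)) : V = ⊤ := by
  haveI := hW
  have hcont : Continuous W.mkQ := continuous_quot_mk
  have h1 : (V.map W.mkQ).comap W.mkQ = V := by
    rw [Submodule.comap_map_eq, Submodule.ker_mkQ, sup_eq_left.mpr hWV]
  have h2 : IsClosed ((V.map W.mkQ : Submodule ℂ (E ⧸ W)) : Set (E ⧸ W)) :=
    Submodule.closed_of_finiteDimensional _
  have h3 : IsClosed (V : Set E) := by
    rw [← h1]
    exact h2.preimage hcont
  have := hd.closure_eq
  rw [h3.closure_eq] at this
  exact SetLike.ext' this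

/-- Auxiliary: orthogonal projection onto a finite-dimensional subspace of a Hilbert space. -/
lemma exists_orth_proj {E : Type*} [NormedAddCommGroup E] [InnerProductSpace ℂ E]
    [CompleteSpace E] (N : Submodule ℂ E) (hN : FiniteDimensional ℂ N) :
    ∃ π : E →L[ℂ] E, (∀ x, π x ∈ N) ∧ (∀ x ∈ N, π x = x) := by
  haveI := hN
  haveI : CompleteSpace N := FiniteDimensional.complete ℂ N
  refine ⟨N.subtypeL.comp (N.orthogonalProjectionOnto), fun x => ?_, fun x hx => ?_⟩
  · exact (N.orthogonalProjectionOnto x).2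
  · simpa using (Submodule.starProjection_eq_self_iff (K := N)).mpr hx

/-- Auxiliary: a continuous projection can be pushed down a continuous injection whose
range contains the (finite-dimensional) target subspace. -/
lemma exists_compatible_proj {X₁ X₀ : Type*}
    [NormedAddCommGroup X₁] [NormedSpace ℂ X₁]
    [NormedAddCommGroup X₀] [NormedSpace ℂ X₀]
    (jX : X₁ →L[ℂ] X₀) (hj : Function.Injective jX)
    (N₀ : Submodule ℂ X₀) (hfin : FiniteDimensional ℂ N₀) (π₀ : X₀ →L[ℂ] X₀)
    (hrange : ∀ x, π₀ x ∈ N₀)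
    (hsub : (N₀ : Set X₀) ⊆ Set.range jX) :
    ∃ π₁ : X₁ →L[ℂ] X₁, ∀ x, jX (π₁ x) = π₀ (jX x) := by
  haveI := hfin
  set N₁ := N₀.comap (jX : X₁ →ₗ[ℂ] X₀) with hN₁
  have hres : ∀ x ∈ N₁, (jX : X₁ →ₗ[ℂ] X₀) x ∈ N₀ := fun x hx => hx
  set r : N₁ →ₗ[ℂ] N₀ := (jX : X₁ →ₗ[ℂ] X₀).restrict hres with hr
  have hrinj : Function.Injective r := fun a b hab => by
    apply Subtype.ext
    exact hj (congrArg Subtype.val hab)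
  have hrsurj : Function.Surjective r := by
    rintro ⟨n, hn⟩
    obtain ⟨x, hx⟩ := hsub hn
    refine ⟨⟨x, ?_⟩, Subtype.ext hx⟩
    show jX x ∈ N₀
    rw [hx]; exact hn
  set e := LinearEquiv.ofBijective r ⟨hrinj, hrsurj⟩ with he
  set u : N₀ →ₗ[ℂ] X₁ := N₁.subtype ∘ₗ e.symm.toLinearMap with hu
  set g : X₀ →L[ℂ] N₀ := π₀.codRestrict N₀ hrange with hg
  refine ⟨(LinearMap.toContinuousLinearMap u).comp (g.comp jX), fun x => ?_⟩
  have h1 : ∀ w : N₀, jX (u w) = (w : X₀) := by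
    intro w
    have : r (e.symm w) = w := e.apply_symm_apply w
    simpa [hu, hr, LinearMap.restrict_apply] using congrArg Subtype.val this
  simpa [hg] using h1 (g (jX x))

/-- Auxiliary: a continuous projection onto a closed summand along a closed complement,
with its basic properties. -/
lemma exists_proj_pair {Y : Type*} [NormedAddCommGroup Y] [NormedSpace ℂ Y] [CompleteSpace Y]
    (R M : Submodule ℂ Y) (h : IsCompl R M) (hR : IsClosed (R : Set Y))
    (hM : IsClosed (M : Set Y)) :
    ∃ Q : Y →L[ℂ] R, (∀ r ∈ R, (Q r : Y) = r) ∧ (∀ m ∈ M, (Q m : Y) = 0) ∧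
      (∀ y, y - Q y ∈ M) := by
  refine ⟨R.linearProjOfClosedCompl M h hR hM, fun r hr => ?_, fun m hm => ?_, fun y => ?_⟩
  · rw [Submodule.coe_continuous_linearProjOfClosedCompl']
    rw [Submodule.linearProjOfIsCompl_apply_left h ⟨r, hr⟩]
  · rw [Submodule.coe_continuous_linearProjOfClosedCompl']
    rw [Submodule.linearProjOfIsCompl_apply_right h ⟨m, hm⟩]
    simp
  · rw [Submodule.coe_continuous_linearProjOfClosedCompl']
    have : (R.projectionOnto M h y : Y) + M.projectionOnto R h.symm y = y :=
      Submodule.projection_add_projection_eq_self h y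
    have h2 : (M.projectionOnto R h.symm y : Y) = y - R.projectionOnto M h y :=
      eq_sub_of_add_eq' this
    rw [← h2]
    exact (M.linearProjOfIsCompl R h.symm y).2

/-- Auxiliary: one-sided parametrix for an operator with closed range, given a projection
killing the kernel. -/
lemma exists_parametrix {X Y : Type*}
    [NormedAddCommGroup X] [NormedSpace ℂ X] [CompleteSpace X]
    [NormedAddCommGroup Y] [NormedSpace ℂ Y] [CompleteSpace Y]
    (T : X →L[ℂ] Y) (π : X →L[ℂ] X)
    (hπ1 : ∀ x, T (π x) = 0) (hπ2 : ∀ x, T x = 0 → π x = x)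
    (R : Submodule ℂ Y) (hR : R = LinearMap.range (T : X →ₗ[ℂ] Y))
    (hRc : IsClosed (R : Set Y)) (Q : Y →L[ℂ] R) :
    ∃ S : Y →L[ℂ] X, (∀ y, π (S y) = 0 ∧ T (S y) = Q y) ∧
      ∀ (y : Y) (x : X), π x = 0 → T x = Q y → x = S y := by
  set W := LinearMap.ker (π : X →ₗ[ℂ] X) with hW
  have hWc : IsClosed (W : Set X) := by
    have : (W : Set X) = π ⁻¹' {0} := rfl
    rw [this]; exact isClosed_singleton.preimage π.continuous
  haveI : CompleteSpace W := hWc.completeSpace_coe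
  haveI : CompleteSpace R := hRc.completeSpace_coe
  have hmem : ∀ w : W, T (W.subtypeL w) ∈ R := by
    intro w; rw [hR]; exact ⟨w, rfl⟩
  set t : W →L[ℂ] R := (T.comp W.subtypeL).codRestrict R hmem with ht
  have hidem : ∀ x : X, π (π x) = π x := fun x => hπ2 _ (hπ1 x)
  have hinj : LinearMap.ker (t : W →ₗ[ℂ] R) = ⊥ := by
    rw [LinearMap.ker_eq_bot']
    rintro ⟨x, hx⟩ h
    have hTx : T x = 0 := congrArg Subtype.val h
    have hx0 : π x = 0 := hx
    have hx1 : x = 0 := by rw [← hπ2 x hTx, hx0]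
    exact Subtype.ext (by simp [hx1])
  have hsurj : LinearMap.range (t : W →ₗ[ℂ] R) = ⊤ := by
    rw [LinearMap.range_eq_top]
    rintro ⟨r, hr⟩
    rw [hR] at hr
    obtain ⟨x, hx⟩ := hr
    refine ⟨⟨x - π x, ?_⟩, ?_⟩
    · show π (x - π x) = 0
      rw [map_sub, hidem, sub_self]
    · apply Subtype.ext
      show T (x - π x) = r
      rw [map_sub, hπ1, sub_zero]; exact hx
  set e := ContinuousLinearEquiv.ofBijective t hinj hsurj with he
  refine ⟨W.subtypeL.comp ((e.symm : R →L[ℂ] W).comp Q), fun y => ⟨?_, ?_⟩, ?_⟩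
  · exact (e.symm (Q y)).2
  · show T ((e.symm (Q y) : W) : X) = Q y
    have : t (e.symm (Q y)) = Q y := e.apply_symm_apply (Q y)
    exact congrArg Subtype.val this
  · intro y x hx hTx
    have h1 : t ⟨x, hx⟩ = Q y := Subtype.ext hTx
    have h2 : e.symm (Q y) = ⟨x, hx⟩ := by
      rw [← h1]; exact e.symm_apply_apply _
    show x = ((e.symm (Q y) : W) : X)
    rw [h2]

/-- Interpolation preserves Fredholmness (Proposition 2).  Here the admissible pairs
`X = [X₀,X₁]`, `Y = [Y₀,Y₁]` of separable Hilbert spaces are given by continuous dense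
embeddings `jX : X₁ ↪ X₀`, `jY : Y₁ ↪ Y₀`; the interpolation spaces `Xψ`, `Yψ` (for an
interpolation parameter `ψ`) are intermediate Hilbert spaces
`X₁ ↪ Xψ ↪ X₀`, `Y₁ ↪ Yψ ↪ Y₀`, and the interpolation property of `ψ` is expressed by
the hypothesis `hinterp`: every linear map bounded on both pairs is bounded between the
`ψ`-spaces.  If `T` is bounded Fredholm on both pairs, with common kernel and the same
index, then `T : Xψ → Yψ` is Fredholm with the same kernel and index, and its range is
`Yψ ∩ T(X₀)`. -/
theorem interpolation_fredholm
    {X₀ X₁ Xψ Y₀ Y₁ Yψ : Type*}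
    [NormedAddCommGroup X₀] [InnerProductSpace ℂ X₀] [CompleteSpace X₀]
      [TopologicalSpace.SeparableSpace X₀]
    [NormedAddCommGroup X₁] [InnerProductSpace ℂ X₁] [CompleteSpace X₁]
      [TopologicalSpace.SeparableSpace X₁]
    [NormedAddCommGroup Xψ] [InnerProductSpace ℂ Xψ] [CompleteSpace Xψ]
    [NormedAddCommGroup Y₀] [InnerProductSpace ℂ Y₀] [CompleteSpace Y₀]
      [TopologicalSpace.SeparableSpace Y₀]
    [NormedAddCommGroup Y₁] [InnerProductSpace ℂ Y₁] [CompleteSpace Y₁]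
      [TopologicalSpace.SeparableSpace Y₁]
    [NormedAddCommGroup Yψ] [InnerProductSpace ℂ Yψ] [CompleteSpace Yψ]
    -- the admissible pairs: continuous dense embeddings X₁ ↪ X₀, Y₁ ↪ Y₀
    (jX : X₁ →L[ℂ] X₀) (hjX : Function.Injective jX ∧ DenseRange jX)
    (jY : Y₁ →L[ℂ] Y₀) (hjY : Function.Injective jY ∧ DenseRange jY)
    -- the interpolation spaces: X₁ ↪ Xψ ↪ X₀ compatibly, with X₁ dense in Xψ
    (kX : X₁ →L[ℂ] Xψ) (iX : Xψ →L[ℂ] X₀)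
    (hiX : Function.Injective iX) (hkX : DenseRange kX) (hcX : iX.comp kX = jX)
    (kY : Y₁ →L[ℂ] Yψ) (iY : Yψ →L[ℂ] Y₀)
    (hiY : Function.Injective iY) (hkY : DenseRange kY) (hcY : iY.comp kY = jY)
    -- the interpolation property of ψ for maps between (and within) the two pairs
    (hinterpXY : ∀ (S₀ : X₀ →L[ℂ] Y₀) (S₁ : X₁ →L[ℂ] Y₁),
      S₀.comp jX = jY.comp S₁ → ∃ Sψ : Xψ →L[ℂ] Yψ, S₀.comp iX = iY.comp Sψ)
    (hinterpYX : ∀ (S₀ : Y₀ →L[ℂ] X₀) (S₁ : Y₁ →L[ℂ] X₁),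
      S₀.comp jY = jX.comp S₁ → ∃ Sψ : Yψ →L[ℂ] Xψ, S₀.comp iY = iX.comp Sψ)
    (hinterpXX : ∀ (S₀ : X₀ →L[ℂ] X₀) (S₁ : X₁ →L[ℂ] X₁),
      S₀.comp jX = jX.comp S₁ → ∃ Sψ : Xψ →L[ℂ] Xψ, S₀.comp iX = iX.comp Sψ)
    (hinterpYY : ∀ (S₀ : Y₀ →L[ℂ] Y₀) (S₁ : Y₁ →L[ℂ] Y₁),
      S₀.comp jY = jY.comp S₁ → ∃ Sψ : Yψ →L[ℂ] Yψ, S₀.comp iY = iY.comp Sψ)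
    -- the operator T, bounded Fredholm on both pairs and on the ψ-spaces
    (T₀ : X₀ →L[ℂ] Y₀) (T₁ : X₁ →L[ℂ] Y₁) (hT : T₀.comp jX = jY.comp T₁)
    (Tψ : Xψ →L[ℂ] Yψ) (hTψ : T₀.comp iX = iY.comp Tψ)
    (hF₀ : IsFredholm T₀) (hF₁ : IsFredholm T₁)
    -- common kernel and equal index
    (hker : (LinearMap.ker (T₀ : X₀ →ₗ[ℂ] Y₀) : Set X₀) ⊆ Set.range jX)
    (hind : fredholmIndex T₀ = fredholmIndex T₁) :
    IsFredholm Tψ ∧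
    Submodule.map (iX : Xψ →ₗ[ℂ] X₀) (LinearMap.ker (Tψ : Xψ →ₗ[ℂ] Yψ)) =
      LinearMap.ker (T₀ : X₀ →ₗ[ℂ] Y₀) ∧
    fredholmIndex Tψ = fredholmIndex T₀ ∧
    ∀ y : Yψ, (∃ x : Xψ, Tψ x = y) ↔ ∃ x₀ : X₀, T₀ x₀ = iY y := by
  classical
  obtain ⟨hjXi, hjXd⟩ := hjX
  obtain ⟨hjYi, hjYd⟩ := hjY
  have hT' : ∀ x, T₀ (jX x) = jY (T₁ x) := fun x => by
    have := ContinuousLinearMap.ext_iff.mp hT x; simpa using this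
  have hTψ' : ∀ x, T₀ (iX x) = iY (Tψ x) := fun x => by
    have := ContinuousLinearMap.ext_iff.mp hTψ x; simpa using this
  have hcX' : ∀ x, iX (kX x) = jX x := fun x => by
    have := ContinuousLinearMap.ext_iff.mp hcX x; simpa using this
  have hcY' : ∀ y, iY (kY y) = jY y := fun y => by
    have := ContinuousLinearMap.ext_iff.mp hcY y; simpa using this
  -- kernel of T₁ vs kernel of T₀
  haveI hFN₀ : FiniteDimensional ℂ (LinearMap.ker (T₀ : X₀ →ₗ[ℂ] Y₀)) := hF₀.1
  haveI hFN₁ : FiniteDimensional ℂ (LinearMap.ker (T₁ : X₁ →ₗ[ℂ] Y₁)) := hF₁.1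
  have hmemN₀ : ∀ z : X₀, z ∈ LinearMap.ker (T₀ : X₀ →ₗ[ℂ] Y₀) ↔ T₀ z = 0 := fun z =>
    LinearMap.mem_ker
  have hmemN₁ : ∀ z : X₁, z ∈ LinearMap.ker (T₁ : X₁ →ₗ[ℂ] Y₁) ↔ T₁ z = 0 := fun z =>
    LinearMap.mem_ker
  have hkerT₁ : ∀ x : X₁, T₁ x = 0 ↔ T₀ (jX x) = 0 := by
    intro x
    constructor
    · intro h; rw [hT', h, map_zero]
    · intro h
      rw [hT'] at h
      exact hjYi (by simpa using h)
  -- linear equivalence between the kernels of T₁ and T₀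
  have hresN : ∀ x ∈ LinearMap.ker (T₁ : X₁ →ₗ[ℂ] Y₁),
      (jX : X₁ →ₗ[ℂ] X₀) x ∈ LinearMap.ker (T₀ : X₀ →ₗ[ℂ] Y₀) := by
    intro x hx
    rw [hmemN₁] at hx
    rw [hmemN₀]
    show T₀ (jX x) = 0
    exact (hkerT₁ x).mp hx
  have heN : ∃ eN : (LinearMap.ker (T₁ : X₁ →ₗ[ℂ] Y₁)) ≃ₗ[ℂ]
      (LinearMap.ker (T₀ : X₀ →ₗ[ℂ] Y₀)), True := by
    have hinj : Function.Injective ((jX : X₁ →ₗ[ℂ] X₀).restrict hresN) := by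
      intro a b hab
      exact Subtype.ext (hjXi (congrArg Subtype.val hab))
    have hsurj : Function.Surjective ((jX : X₁ →ₗ[ℂ] X₀).restrict hresN) := by
      rintro ⟨n, hn⟩
      obtain ⟨x, hx⟩ := hker hn
      refine ⟨⟨x, ?_⟩, Subtype.ext hx⟩
      rw [hmemN₁, hkerT₁]
      show T₀ (jX x) = 0
      rw [hx]
      exact (hmemN₀ n).mp hn
    exact ⟨LinearEquiv.ofBijective _ ⟨hinj, hsurj⟩, trivial⟩
  obtain ⟨eN, -⟩ := heN
  -- the compatible kernel projections
  obtain ⟨π₀, hπ₀1, hπ₀2⟩ := exists_orth_proj (LinearMap.ker (T₀ : X₀ →ₗ[ℂ] Y₀)) hFN₀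
  have hπ₀T : ∀ x, T₀ (π₀ x) = 0 := fun x => (hmemN₀ _).mp (hπ₀1 x)
  have hπ₀fix : ∀ x, T₀ x = 0 → π₀ x = x := fun x hx => hπ₀2 x ((hmemN₀ x).mpr hx)
  obtain ⟨π₁, hπ₁⟩ := exists_compatible_proj jX hjXi _ hFN₀ π₀ hπ₀1 hker
  have hπ₁T : ∀ x, T₁ (π₁ x) = 0 := by
    intro x
    rw [hkerT₁, hπ₁, hπ₀T]
  have hπ₁fix : ∀ x, T₁ x = 0 → π₁ x = x := by
    intro x hx
    apply hjXi
    rw [hπ₁, hπ₀fix _ ((hkerT₁ x).mp hx)]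
  -- ranges
  set R₀ := LinearMap.range (T₀ : X₀ →ₗ[ℂ] Y₀) with hR₀def
  set R₁ := LinearMap.range (T₁ : X₁ →ₗ[ℂ] Y₁) with hR₁def
  have hR₀c : IsClosed (R₀ : Set Y₀) := by
    have : (R₀ : Set Y₀) = Set.range T₀ := by
      rw [hR₀def]; simp [LinearMap.coe_range]
    rw [this]; exact hF₀.2.1
  have hR₁c : IsClosed (R₁ : Set Y₁) := by
    have : (R₁ : Set Y₁) = Set.range T₁ := by
      rw [hR₁def]; simp [LinearMap.coe_range]
    rw [this]; exact hF₁.2.1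
  haveI : CompleteSpace R₁ := hR₁c.completeSpace_coe
  set M₁ := R₁ᗮ with hM₁def
  have hcompl₁ : IsCompl R₁ M₁ := Submodule.isCompl_orthogonal_of_hasOrthogonalProjection
  haveI hFcoker₁ : FiniteDimensional ℂ (Y₁ ⧸ R₁) := hF₁.2.2
  haveI hFcoker₀ : FiniteDimensional ℂ (Y₀ ⧸ R₀) := hF₀.2.2
  haveI hFM₁ : FiniteDimensional ℂ M₁ :=
    (R₁.quotientEquivOfIsCompl M₁ hcompl₁).finiteDimensional
  set Q₁ : Y₁ →L[ℂ] R₁ := R₁.orthogonalProjectionOnto with hQ₁def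
  have hQ₁fix : ∀ r ∈ R₁, (Q₁ r : Y₁) = r := fun r hr =>
    Submodule.starProjection_eq_self_iff.mpr hr
  have hQ₁M : ∀ m ∈ M₁, Q₁ m = 0 := fun m hm =>
    Submodule.orthogonalProjectionOnto_eq_zero_iff.mpr hm
  have hQ₁sub : ∀ y, y - Q₁ y ∈ M₁ := fun y => Submodule.sub_starProjection_mem_orthogonal y
  -- equal dimension of cokernels
  have hdim : Module.finrank ℂ (Y₀ ⧸ R₀) = Module.finrank ℂ (Y₁ ⧸ R₁) := by
    have hk : Module.finrank ℂ (LinearMap.ker (T₁ : X₁ →ₗ[ℂ] Y₁)) =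
        Module.finrank ℂ (LinearMap.ker (T₀ : X₀ →ₗ[ℂ] Y₀)) := eN.finrank_eq
    unfold fredholmIndex at hind
    rw [← hR₀def, ← hR₁def] at hind
    omega
  -- density: R₀ ⊔ range jY = ⊤
  have hsup : R₀ ⊔ LinearMap.range (jY : Y₁ →ₗ[ℂ] Y₀) = ⊤ := by
    apply aux_dense_fin_codim _ _ hR₀c hFcoker₀ le_sup_left
    have hsub : (Set.range ⇑jY) ⊆ ((R₀ ⊔ LinearMap.range (jY : Y₁ →ₗ[ℂ] Y₀) : Submodule ℂ Y₀) : Set Y₀) := by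
      rintro y ⟨x, rfl⟩
      exact Submodule.mem_sup_right ⟨x, rfl⟩
    exact Dense.mono hsub hjYd
  -- key: jY pulls the range of T₀ back to the range of T₁
  have hjYR₁ : ∀ m ∈ R₁, jY m ∈ R₀ := by
    rintro m ⟨x, rfl⟩
    exact ⟨jX x, hT' x⟩
  have hkey : ∀ y : Y₁, jY y ∈ R₀ → y ∈ R₁ := by
    set φ : Y₁ →ₗ[ℂ] Y₀ ⧸ R₀ := R₀.mkQ ∘ₗ (jY : Y₁ →ₗ[ℂ] Y₀) with hφdef
    have hφsurj : Function.Surjective φ := by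
      intro z
      obtain ⟨y₀, rfl⟩ := R₀.mkQ_surjective z
      have hy₀ : y₀ ∈ R₀ ⊔ LinearMap.range (jY : Y₁ →ₗ[ℂ] Y₀) := by
        rw [hsup]; trivial
      obtain ⟨w, hw, v, hv, rfl⟩ := Submodule.mem_sup.mp hy₀
      obtain ⟨u, rfl⟩ := hv
      refine ⟨u, ?_⟩
      simp only [hφdef, LinearMap.comp_apply, Submodule.mkQ_apply]
      rw [Submodule.Quotient.eq]
      simpa using hw
    have hφker : R₁ ≤ LinearMap.ker φ := by
      rintro m hm
      simp only [hφdef, LinearMap.mem_ker, LinearMap.comp_apply, Submodule.mkQ_apply,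
        Submodule.Quotient.mk_eq_zero]
      exact hjYR₁ m hm
    set φ' := R₁.liftQ φ hφker with hφ'def
    have hφ's : Function.Surjective φ' := by
      intro z
      obtain ⟨u, hu⟩ := hφsurj z
      exact ⟨R₁.mkQ u, by rw [hφ'def, Submodule.mkQ_apply, Submodule.liftQ_apply]; exact hu⟩
    have hφ'i : Function.Injective φ' :=
      (LinearMap.injective_iff_surjective_of_finrank_eq_finrank hdim.symm).mpr hφ's
    intro y hy
    have h1 : φ' (R₁.mkQ y) = 0 := by
      rw [hφ'def, Submodule.mkQ_apply, Submodule.liftQ_apply]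
      simp only [hφdef, LinearMap.comp_apply, Submodule.mkQ_apply,
        Submodule.Quotient.mk_eq_zero]
      exact hy
    have h2 : R₁.mkQ y = 0 := hφ'i (by rw [h1, map_zero])
    rwa [Submodule.mkQ_apply, Submodule.Quotient.mk_eq_zero] at h2
  -- the complement M₀ := jY(M₁) of R₀
  set M₀ := M₁.map (jY : Y₁ →ₗ[ℂ] Y₀) with hM₀def
  haveI hFM₀ : FiniteDimensional ℂ M₀ :=
    (M₁.equivMapOfInjective (jY : Y₁ →ₗ[ℂ] Y₀) hjYi).finiteDimensional
  have hM₀c : IsClosed (M₀ : Set Y₀) := Submodule.closed_of_finiteDimensional _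
  have hcompl₀ : IsCompl R₀ M₀ := by
    constructor
    · rw [Submodule.disjoint_def]
      rintro x hxR ⟨m, hm, rfl⟩
      have : m ∈ R₁ := hkey m hxR
      have : m = 0 := Submodule.disjoint_def.mp R₁.orthogonal_disjoint m this hm
      rw [this, map_zero]
    · rw [codisjoint_iff, eq_top_iff]
      intro y _
      have hy : y ∈ R₀ ⊔ LinearMap.range (jY : Y₁ →ₗ[ℂ] Y₀) := by rw [hsup]; trivial
      obtain ⟨w, hw, v, hv, rfl⟩ := Submodule.mem_sup.mp hy
      obtain ⟨u, rfl⟩ := hv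
      have hu : jY u = jY (Q₁ u : Y₁) + jY (u - (Q₁ u : Y₁)) := by
        rw [← map_add]; congr 1; abel
      show w + jY u ∈ R₀ ⊔ M₀
      rw [hu]
      refine Submodule.add_mem _ (Submodule.mem_sup_left hw) ?_
      refine Submodule.add_mem _ ?_ ?_
      · exact Submodule.mem_sup_left (hjYR₁ _ (Q₁ u).2)
      · exact Submodule.mem_sup_right ⟨u - Q₁ u, hQ₁sub u, rfl⟩
  obtain ⟨Q₀, hQ₀fix, hQ₀M, hQ₀sub⟩ := exists_proj_pair R₀ M₀ hcompl₀ hR₀c hM₀c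
  have hQcomp : ∀ y : Y₁, (Q₀ (jY y) : Y₀) = jY (Q₁ y : Y₁) := by
    intro y
    have hy : jY y = jY (Q₁ y : Y₁) + jY (y - (Q₁ y : Y₁)) := by
      rw [← map_add]; congr 1; abel
    have hmem2 : jY (y - (Q₁ y : Y₁)) ∈ M₀ := ⟨y - Q₁ y, hQ₁sub y, rfl⟩
    rw [hy, map_add, Submodule.coe_add]
    rw [hQ₀fix _ (hjYR₁ _ (Q₁ y).2), hQ₀M _ hmem2, add_zero]
  -- parametrices
  obtain ⟨S₀, hS₀props, hS₀uniq⟩ := exists_parametrix T₀ π₀ hπ₀T hπ₀fix R₀ hR₀def hR₀c Q₀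
  obtain ⟨S₁, hS₁props, hS₁uniq⟩ := exists_parametrix T₁ π₁ hπ₁T hπ₁fix R₁ hR₁def hR₁c Q₁
  have hScomp : S₀.comp jY = jX.comp S₁ := by
    ext y
    simp only [ContinuousLinearMap.comp_apply]
    have h1 : π₀ (jX (S₁ y)) = 0 := by
      rw [← hπ₁, (hS₁props y).1, map_zero]
    have h2 : T₀ (jX (S₁ y)) = (Q₀ (jY y) : Y₀) := by
      rw [hT', (hS₁props y).2, hQcomp]
    exact (hS₀uniq (jY y) (jX (S₁ y)) h1 h2).symm
  obtain ⟨Rψ, hRψ⟩ := hinterpYX S₀ S₁ hScomp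
  have hRψ' : ∀ y, S₀ (iY y) = iX (Rψ y) := fun y => by
    have := ContinuousLinearMap.ext_iff.mp hRψ y; simpa using this
  -- projections as endomorphisms, interpolated
  set Q₀e : Y₀ →L[ℂ] Y₀ := R₀.subtypeL.comp Q₀ with hQ₀edef
  set Q₁e : Y₁ →L[ℂ] Y₁ := R₁.subtypeL.comp Q₁ with hQ₁edef
  have hQecomp : Q₀e.comp jY = jY.comp Q₁e := by
    ext y
    simp only [hQ₀edef, hQ₁edef, ContinuousLinearMap.comp_apply, Submodule.coe_subtypeL',
      Submodule.coe_subtype]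
    exact hQcomp y
  obtain ⟨Qψ, hQψ⟩ := hinterpYY Q₀e Q₁e hQecomp
  have hQψ' : ∀ y, (Q₀ (iY y) : Y₀) = iY (Qψ y) := fun y => by
    have := ContinuousLinearMap.ext_iff.mp hQψ y
    simpa [hQ₀edef] using this
  -- key identities on the ψ-level
  have hTR : ∀ y, Tψ (Rψ y) = Qψ y := by
    intro y
    apply hiY
    rw [← hTψ', ← hRψ', (hS₀props (iY y)).2, hQψ']
  have hfix : ∀ y : Yψ, iY y ∈ R₀ → Qψ y = y := by
    intro y hy
    apply hiY
    rw [← hQψ', hQ₀fix _ hy]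
  have hmemR₀ : ∀ x : Xψ, iY (Tψ x) ∈ R₀ := by
    intro x
    refine ⟨iX x, ?_⟩
    show T₀ (iX x) = iY (Tψ x)
    exact hTψ' x
  have hQT : ∀ x, Qψ (Tψ x) = Tψ x := fun x => hfix _ (hmemR₀ x)
  -- range characterization
  have hrangeIff : ∀ y : Yψ, (∃ x : Xψ, Tψ x = y) ↔ ∃ x₀ : X₀, T₀ x₀ = iY y := by
    intro y
    constructor
    · rintro ⟨x, rfl⟩
      exact ⟨iX x, hTψ' x⟩
    · rintro ⟨x₀, hx₀⟩
      have hy : iY y ∈ R₀ := ⟨x₀, hx₀⟩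
      exact ⟨Rψ y, by rw [hTR, hfix y hy]⟩
  -- idempotency of Qψ
  have hQQ : ∀ y, Qψ (Qψ y) = Qψ y := by
    intro y
    apply hfix
    rw [← hQψ']
    exact (Q₀ (iY y)).2
  -- the range of Tψ equals the kernel of 1 - Qψ
  set G : Yψ →L[ℂ] Yψ := ContinuousLinearMap.id ℂ Yψ - Qψ with hGdef
  have hG : ∀ y, G y = y - Qψ y := fun y => rfl
  have hrangeT : LinearMap.range (Tψ : Xψ →ₗ[ℂ] Yψ) = LinearMap.ker (G : Yψ →ₗ[ℂ] Yψ) := by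
    ext y
    simp only [LinearMap.mem_range, LinearMap.mem_ker, ContinuousLinearMap.coe_coe]
    constructor
    · rintro ⟨x, rfl⟩
      rw [hG, hQT, sub_self]
    · intro hy
      rw [hG, sub_eq_zero] at hy
      exact ⟨Rψ y, by rw [hTR, ← hy]⟩
  -- closedness of the range of Tψ
  have hclosed : IsClosed (Set.range ⇑Tψ) := by
    have h1 : Set.range ⇑Tψ = (LinearMap.ker (G : Yψ →ₗ[ℂ] Yψ) : Set Yψ) := by
      rw [← hrangeT]; simp [LinearMap.coe_range]
    rw [h1]
    have h2 : (LinearMap.ker (G : Yψ →ₗ[ℂ] Yψ) : Set Yψ) = G ⁻¹' {0} := by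
      ext z; simp [LinearMap.mem_ker]
    rw [h2]
    exact isClosed_singleton.preimage G.continuous
  -- kernel equivalence
  have hresKψ : ∀ x ∈ LinearMap.ker (Tψ : Xψ →ₗ[ℂ] Yψ),
      (iX : Xψ →ₗ[ℂ] X₀) x ∈ LinearMap.ker (T₀ : X₀ →ₗ[ℂ] Y₀) := by
    intro x hx
    rw [LinearMap.mem_ker] at hx ⊢
    show T₀ (iX x) = 0
    rw [hTψ', show Tψ x = 0 from hx, map_zero]
  have heKψ : ∃ e : (LinearMap.ker (Tψ : Xψ →ₗ[ℂ] Yψ)) ≃ₗ[ℂ]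
      (LinearMap.ker (T₀ : X₀ →ₗ[ℂ] Y₀)), ∀ v, (e v : X₀) = iX v := by
    have hinj : Function.Injective ((iX : Xψ →ₗ[ℂ] X₀).restrict hresKψ) := by
      intro a b hab
      exact Subtype.ext (hiX (congrArg Subtype.val hab))
    have hsurj : Function.Surjective ((iX : Xψ →ₗ[ℂ] X₀).restrict hresKψ) := by
      rintro ⟨n, hn⟩
      obtain ⟨x₁, hx₁⟩ := hker hn
      have hT₁x₁ : T₁ x₁ = 0 := by
        rw [hkerT₁, hx₁]
        exact (hmemN₀ n).mp hn
      have hTψx : Tψ (kX x₁) = 0 := by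
        apply hiY
        rw [← hTψ', hcX', hx₁, map_zero]
        exact (hmemN₀ n).mp hn
      refine ⟨⟨kX x₁, (LinearMap.mem_ker (f := (Tψ : Xψ →ₗ[ℂ] Yψ))).mpr hTψx⟩, ?_⟩
      exact Subtype.ext (by show iX (kX x₁) = n; rw [hcX', hx₁])
    exact ⟨LinearEquiv.ofBijective _ ⟨hinj, hsurj⟩, fun v => rfl⟩
  obtain ⟨eKψ, heKψ'⟩ := heKψ
  haveI hFkerψ : FiniteDimensional ℂ (LinearMap.ker (Tψ : Xψ →ₗ[ℂ] Yψ)) :=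
    eKψ.symm.finiteDimensional
  -- map equality (conclusion 2)
  have hmap : Submodule.map (iX : Xψ →ₗ[ℂ] X₀) (LinearMap.ker (Tψ : Xψ →ₗ[ℂ] Yψ)) =
      LinearMap.ker (T₀ : X₀ →ₗ[ℂ] Y₀) := by
    apply le_antisymm
    · rintro _ ⟨x, hx, rfl⟩
      exact hresKψ x hx
    · intro n hn
      obtain ⟨v, hv⟩ := eKψ.surjective ⟨n, hn⟩
      refine ⟨(v : Xψ), v.2, ?_⟩
      have := heKψ' v
      rw [hv] at this
      exact this.symm
  -- identification of the cokernel
  have hGQ : LinearMap.range (G : Yψ →ₗ[ℂ] Yψ) = LinearMap.ker (Qψ : Yψ →ₗ[ℂ] Yψ) := by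
    ext y
    simp only [LinearMap.mem_range, LinearMap.mem_ker, ContinuousLinearMap.coe_coe]
    constructor
    · rintro ⟨z, rfl⟩
      rw [hG, map_sub, hQQ, sub_self]
    · intro hy
      exact ⟨y, by rw [hG, show Qψ y = 0 from hy, sub_zero]⟩
  have heM : ∃ e : (LinearMap.ker (Qψ : Yψ →ₗ[ℂ] Yψ)) ≃ₗ[ℂ] M₀, True := by
    have hres : ∀ y ∈ LinearMap.ker (Qψ : Yψ →ₗ[ℂ] Yψ), (iY : Yψ →ₗ[ℂ] Y₀) y ∈ M₀ := by
      intro y hy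
      have h0 : (Q₀ (iY y) : Y₀) = 0 := by
        rw [hQψ', show Qψ y = 0 from hy, map_zero]
      have := hQ₀sub (iY y)
      rwa [h0, sub_zero] at this
    have hinj : Function.Injective ((iY : Yψ →ₗ[ℂ] Y₀).restrict hres) := by
      intro a b hab
      exact Subtype.ext (hiY (congrArg Subtype.val hab))
    have hsurj : Function.Surjective ((iY : Yψ →ₗ[ℂ] Y₀).restrict hres) := by
      rintro ⟨m, hm⟩
      obtain ⟨m₁, hm₁, rfl⟩ := hm
      have hQm : Qψ (kY m₁) = 0 := by
        apply hiY
        rw [← hQψ', hcY', map_zero]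
        rw [hQcomp, hQ₁M m₁ hm₁]
        simp
      refine ⟨⟨kY m₁, hQm⟩, ?_⟩
      exact Subtype.ext (by show iY (kY m₁) = jY m₁; exact hcY' m₁)
    exact ⟨LinearEquiv.ofBijective _ ⟨hinj, hsurj⟩, trivial⟩
  obtain ⟨eM, -⟩ := heM
  haveI hFkerQψ : FiniteDimensional ℂ (LinearMap.ker (Qψ : Yψ →ₗ[ℂ] Yψ)) :=
    eM.symm.finiteDimensional
  have echain : (Yψ ⧸ LinearMap.range (Tψ : Xψ →ₗ[ℂ] Yψ)) ≃ₗ[ℂ] M₀ :=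
    ((Submodule.quotEquivOfEq _ _ hrangeT).trans
      (G : Yψ →ₗ[ℂ] Yψ).quotKerEquivRange).trans ((LinearEquiv.ofEq _ _ hGQ).trans eM)
  haveI hFcokerψ : FiniteDimensional ℂ (Yψ ⧸ LinearMap.range (Tψ : Xψ →ₗ[ℂ] Yψ)) :=
    echain.symm.finiteDimensional
  -- dimension bookkeeping
  have hrank_coker : Module.finrank ℂ (Yψ ⧸ LinearMap.range (Tψ : Xψ →ₗ[ℂ] Yψ)) =
      Module.finrank ℂ (Y₀ ⧸ R₀) := by
    have h1 := echain.finrank_eq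
    have h2 : Module.finrank ℂ M₁ = Module.finrank ℂ M₀ :=
      (M₁.equivMapOfInjective (jY : Y₁ →ₗ[ℂ] Y₀) hjYi).finrank_eq
    have h3 : Module.finrank ℂ (Y₁ ⧸ R₁) = Module.finrank ℂ M₁ :=
      (R₁.quotientEquivOfIsCompl M₁ hcompl₁).finrank_eq
    rw [h1, ← h2, ← h3, hdim]
  have hrank_ker : Module.finrank ℂ (LinearMap.ker (Tψ : Xψ →ₗ[ℂ] Yψ)) =
      Module.finrank ℂ (LinearMap.ker (T₀ : X₀ →ₗ[ℂ] Y₀)) := eKψ.finrank_eq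
  refine ⟨⟨hFkerψ, hclosed, hFcokerψ⟩, hmap, ?_, hrangeIff⟩
  unfold fredholmIndex
  rw [hrank_ker, hrank_coker, ← hR₀def]
end
end
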